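/- arXiv:1303.5999 — 5 statements merged into one kernel-verified Lean document; each statement's English description precedes it below -/
import Mathlib

section
/- For vertex-disjoint graphs G and H, the domination polynomial satisfies D(G ∨ H, x) = ((1+x)^{v(G)} − 1)·((1+x)^{v(H)} − 1) + D(G,x) + D(H,x). -/
/-- `S` dominates `G`: every vertex is in `S` or adjacent to a member of `S`. -/
def Dominates {V : Type*} (G : SimpleGraph V) (S : Set V) : Prop :=
  ∀ v : V, v ∈ S ∨ ∃ u ∈ S, G.Adj u v

/-- number of dominating sets of cardinality `i`. -/
noncomputable def numDom {V : Type*} [Fintype V] (G : SimpleGraph V) (i : ℕ) : ℕ :=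
  Nat.card {S : Finset V // S.card = i ∧ Dominates G ↑S}

/-- the domination polynomial `D(G,x) = Σ_{i=1}^{n} d(G,i) x^i`. -/
noncomputable def domPoly {V : Type*} [Fintype V] (G : SimpleGraph V) : Polynomial ℤ :=
  ∑ i ∈ Finset.Icc 1 (Fintype.card V), (numDom G i : Polynomial ℤ) * Polynomial.X ^ i

/-- the join of two vertex-disjoint graphs. -/
def GJoin {α β : Type*} (G : SimpleGraph α) (H : SimpleGraph β) : SimpleGraph (α ⊕ β) where
  Adj x y := match x, y with
    | Sum.inl a, Sum.inl b => G.Adj a b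
    | Sum.inr a, Sum.inr b => H.Adj a b
    | _, _ => True
  symm := by constructor; rintro (a|a) (b|b) h <;> simp_all [SimpleGraph.adj_comm]
  loopless := by constructor; rintro (a|a) h <;> simp_all

/-- `H_t(a)`: a copy of `K_a` and a copy of `K_{a+t}`, connected by a matching
from `K_a` into `K_{a+t}`. -/
def Hgraph (a t : ℕ) : SimpleGraph (Fin a ⊕ Fin (a + t)) where
  Adj x y := match x, y with
    | Sum.inl i, Sum.inl j => i ≠ j
    | Sum.inr i, Sum.inr j => i ≠ j
    | Sum.inl i, Sum.inr j => (j : ℕ) = (i : ℕ)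
    | Sum.inr i, Sum.inl j => (i : ℕ) = (j : ℕ)
  symm := by constructor; rintro (i|i) (j|j) h <;> simp_all <;> omega
  loopless := by constructor; rintro (i|i) h <;> simp_all

open Finset Polynomial
open scoped Classical

lemma numDom_eq_card {V : Type*} [Fintype V] (G : SimpleGraph V) (i : ℕ) :
    numDom G i =
      (Finset.univ.filter fun S : Finset V => S.card = i ∧ Dominates G ↑S).card := by
  classical
  rw [numDom, Nat.card_eq_fintype_card, Fintype.card_subtype]

lemma domPoly_eq_sum {V : Type*} [Fintype V] (G : SimpleGraph V) :
    domPoly G = ∑ S ∈ Finset.univ.filter (fun S : Finset V => S.Nonempty ∧ Dominates G ↑S),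
      (Polynomial.X : Polynomial ℤ) ^ S.card := by
  classical
  rw [← Finset.sum_fiberwise_of_maps_to (g := fun S : Finset V => S.card)
      (t := Finset.Icc 1 (Fintype.card V))
      (fun S hS => by
        simp only [Finset.mem_filter] at hS
        exact Finset.mem_Icc.2 ⟨hS.2.1.card_pos, S.card_le_univ⟩)]
  unfold domPoly
  refine Finset.sum_congr rfl fun i hi => ?_
  have hi1 : 1 ≤ i := (Finset.mem_Icc.1 hi).1
  have hfil : (Finset.univ.filter (fun S : Finset V => S.Nonempty ∧ Dominates G ↑S)).filter
      (fun S => S.card = i)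
      = Finset.univ.filter fun S : Finset V => S.card = i ∧ Dominates G ↑S := by
    rw [Finset.filter_filter]
    refine Finset.filter_congr fun S _ => ?_
    constructor
    · rintro ⟨⟨_, hd⟩, hc⟩; exact ⟨hc, hd⟩
    · rintro ⟨hc, hd⟩
      exact ⟨⟨Finset.card_pos.1 (hc ▸ hi1), hd⟩, hc⟩
  rw [hfil]
  rw [Finset.sum_congr rfl (fun S hS => by
    rw [(Finset.mem_filter.1 hS).2.1])]
  rw [Finset.sum_const, numDom_eq_card, nsmul_eq_mul]

lemma pow_card_sub_one_eq {V : Type*} [Fintype V] :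
    ((1 + Polynomial.X : Polynomial ℤ) ^ Fintype.card V - 1) =
      ∑ A ∈ Finset.univ.filter (fun A : Finset V => A.Nonempty),
        (Polynomial.X : Polynomial ℤ) ^ A.card := by
  classical
  have h : ((1 + Polynomial.X : Polynomial ℤ)) ^ Fintype.card V
      = ∑ A : Finset V, (Polynomial.X : Polynomial ℤ) ^ A.card := by
    rw [add_comm, ← Finset.card_univ, ← Finset.prod_const, Finset.prod_add]
    simp [Finset.powerset_univ]
  rw [h, ← Finset.sum_filter_add_sum_filter_not Finset.univ (fun A : Finset V => A.Nonempty)]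
  have h2 : Finset.univ.filter (fun A : Finset V => ¬A.Nonempty) = {∅} := by
    ext A; simp [Finset.not_nonempty_iff_eq_empty]
  rw [h2]
  simp

lemma finset_sum_nonempty_iff {α β : Type*} (S : Finset (α ⊕ β)) :
    S.Nonempty ↔ S.toLeft.Nonempty ∨ S.toRight.Nonempty := by
  constructor
  · rintro ⟨x, hx⟩
    cases x with
    | inl a => exact Or.inl ⟨a, Finset.mem_toLeft.2 hx⟩
    | inr b => exact Or.inr ⟨b, Finset.mem_toRight.2 hx⟩
  · rintro (⟨a, ha⟩ | ⟨b, hb⟩)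
    · exact ⟨Sum.inl a, Finset.mem_toLeft.1 ha⟩
    · exact ⟨Sum.inr b, Finset.mem_toRight.1 hb⟩

lemma dominates_join_iff {α β : Type*} (G : SimpleGraph α) (H : SimpleGraph β)
    (A : Finset α) (B : Finset β) (h : A.Nonempty ∨ B.Nonempty) :
    Dominates (GJoin G H) ↑(A.disjSum B) ↔
      (A.Nonempty ∧ B.Nonempty) ∨ (A.Nonempty ∧ B = ∅ ∧ Dominates G ↑A) ∨
        (B.Nonempty ∧ A = ∅ ∧ Dominates H ↑B) := by
  constructor
  · intro hd
    rcases Finset.eq_empty_or_nonempty A with hA | hA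
    · have hB : B.Nonempty := by
        rcases h with h | h
        · exact absurd hA h.ne_empty
        · exact h
      refine Or.inr (Or.inr ⟨hB, hA, fun b => ?_⟩)
      rcases hd (Sum.inr b) with hb | ⟨u, hu, hadj⟩
      · exact Or.inl (by simpa using hb)
      · cases u with
        | inl a =>
          have : a ∈ A := by simpa using hu
          simp [hA] at this
        | inr b' =>
          exact Or.inr ⟨b', by simpa using hu, hadj⟩
    · rcases Finset.eq_empty_or_nonempty B with hB | hB
      · refine Or.inr (Or.inl ⟨hA, hB, fun a => ?_⟩)
        rcases hd (Sum.inl a) with ha | ⟨u, hu, hadj⟩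
        · exact Or.inl (by simpa using ha)
        · cases u with
          | inl a' => exact Or.inr ⟨a', by simpa using hu, hadj⟩
          | inr b =>
            have : b ∈ B := by simpa using hu
            simp [hB] at this
      · exact Or.inl ⟨hA, hB⟩
  · rintro (⟨⟨a, ha⟩, ⟨b, hb⟩⟩ | ⟨hA, hB, hd⟩ | ⟨hB, hA, hd⟩)
    · intro v
      cases v with
      | inl a' =>
        exact Or.inr ⟨Sum.inr b, by simpa using hb, by simp [GJoin]⟩
      | inr b' =>
        exact Or.inr ⟨Sum.inl a, by simpa using ha, by simp [GJoin]⟩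
    · intro v
      cases v with
      | inl a =>
        rcases hd a with ha | ⟨a', ha', hadj⟩
        · exact Or.inl (by simpa using ha)
        · exact Or.inr ⟨Sum.inl a', by simpa using ha', hadj⟩
      | inr b =>
        obtain ⟨a, ha⟩ := hA
        exact Or.inr ⟨Sum.inl a, by simpa using ha, by simp [GJoin]⟩
    · intro v
      cases v with
      | inl a =>
        obtain ⟨b, hb⟩ := hB
        exact Or.inr ⟨Sum.inr b, by simpa using hb, by simp [GJoin]⟩
      | inr b =>
        rcases hd b with hb | ⟨b', hb', hadj⟩
        · exact Or.inl (by simpa using hb)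
        · exact Or.inr ⟨Sum.inr b', by simpa using hb', hadj⟩

/-- `D(G ∨ H, x) = ((1+x)^{v(G)} − 1)((1+x)^{v(H)} − 1) + D(G,x) + D(H,x)`. -/
theorem domPoly_join {α β : Type*} [Fintype α] [Fintype β]
    (G : SimpleGraph α) (H : SimpleGraph β) :
    domPoly (GJoin G H) =
      ((1 + Polynomial.X) ^ Fintype.card α - 1) *
        ((1 + Polynomial.X) ^ Fintype.card β - 1) + domPoly G + domPoly H := by
  classical
  rw [domPoly_eq_sum, domPoly_eq_sum, domPoly_eq_sum, pow_card_sub_one_eq (V := α),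
    pow_card_sub_one_eq (V := β)]
  set Q1 : Finset α × Finset β → Prop := fun p => p.1.Nonempty ∧ p.2.Nonempty with hQ1
  set Q2 : Finset α × Finset β → Prop :=
    fun p => p.1.Nonempty ∧ p.2 = ∅ ∧ Dominates G ↑p.1 with hQ2
  set Q3 : Finset α × Finset β → Prop :=
    fun p => p.2.Nonempty ∧ p.1 = ∅ ∧ Dominates H ↑p.2 with hQ3
  have key : ∑ S ∈ Finset.univ.filter
        (fun S : Finset (α ⊕ β) => S.Nonempty ∧ Dominates (GJoin G H) ↑S),
        (Polynomial.X : Polynomial ℤ) ^ S.card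
      = ∑ p ∈ (Finset.univ ×ˢ Finset.univ).filter (fun p => Q1 p ∨ Q2 p ∨ Q3 p),
        (Polynomial.X : Polynomial ℤ) ^ (p.1.card + p.2.card) := by
    refine Finset.sum_nbij' (fun S => (S.toLeft, S.toRight)) (fun p => p.1.disjSum p.2)
      ?_ ?_ ?_ ?_ ?_
    · intro S hS
      simp only [Finset.mem_filter] at hS ⊢
      obtain ⟨_, hne, hdom⟩ := hS
      have h := (finset_sum_nonempty_iff S).1 hne
      refine ⟨by simp, ?_⟩
      rw [← S.toLeft_disjSum_toRight] at hdom
      exact (dominates_join_iff G H _ _ h).1 hdom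
    · intro p hp
      simp only [Finset.mem_filter] at hp ⊢
      have h : p.1.Nonempty ∨ p.2.Nonempty := by
        rcases hp.2 with h | h | h
        · exact Or.inl h.1
        · exact Or.inl h.1
        · exact Or.inr h.1
      refine ⟨Finset.mem_univ _, ?_, ?_⟩
      · rw [finset_sum_nonempty_iff]
        simpa using h
      · rw [dominates_join_iff G H _ _ h]
        exact hp.2
    · intro S _; exact S.toLeft_disjSum_toRight
    · intro p _; simp
    · intro S hS
      rw [← Finset.card_toLeft_add_card_toRight]
  rw [key]
  have hdisj1 : ∀ p : Finset α × Finset β, Q1 p → ¬(Q2 p ∨ Q3 p) := by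
    rintro p ⟨h1, h2⟩ (⟨_, he, _⟩ | ⟨_, he, _⟩)
    · exact h2.ne_empty he
    · exact h1.ne_empty he
  have hdisj2 : ∀ p : Finset α × Finset β, Q2 p → ¬Q3 p := by
    rintro p ⟨h1, _, _⟩ ⟨_, he, _⟩
    exact h1.ne_empty he
  rw [Finset.filter_or, Finset.filter_or]
  rw [Finset.sum_union (by
    rw [Finset.disjoint_left]
    intro p hp hp'
    simp only [Finset.mem_filter, Finset.mem_union] at hp hp'
    exact hdisj1 p hp.2 (by rcases hp' with ⟨_, h⟩ | ⟨_, h⟩ <;> [exact Or.inl h; exact Or.inr h]))]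
  rw [Finset.sum_union (by
    rw [Finset.disjoint_left]
    intro p hp hp'
    simp only [Finset.mem_filter] at hp hp'
    exact hdisj2 p hp.2 hp'.2)]
  rw [add_assoc]
  congr 1
  · -- first piece: over Q1
    have e1 : (Finset.univ ×ˢ Finset.univ).filter Q1
        = (Finset.univ.filter (fun A : Finset α => A.Nonempty)) ×ˢ
            (Finset.univ.filter (fun B : Finset β => B.Nonempty)) := by
      ext p
      simp [hQ1, Finset.mem_filter, Finset.mem_product]
    rw [e1, Finset.sum_product, Finset.sum_mul_sum]
    simp [pow_add]
  congr 1
  · -- second piece: over Q2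
    refine Finset.sum_nbij' (fun p => p.1) (fun A => (A, ∅)) ?_ ?_ ?_ ?_ ?_
    · intro p hp
      simp only [Finset.mem_filter, hQ2] at hp ⊢
      exact ⟨Finset.mem_univ _, hp.2.1, hp.2.2.2⟩
    · intro A hA
      simp only [Finset.mem_filter, hQ2] at hA ⊢
      exact ⟨by simp, hA.2.1, by trivial, hA.2.2⟩
    · intro p hp
      simp only [Finset.mem_filter, hQ2] at hp
      exact Prod.ext rfl hp.2.2.1.symm
    · intro A _; rfl
    · intro p hp
      simp only [Finset.mem_filter, hQ2] at hp
      rw [hp.2.2.1]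
      simp
  · -- third piece: over Q3
    refine Finset.sum_nbij' (fun p => p.2) (fun B => (∅, B)) ?_ ?_ ?_ ?_ ?_
    · intro p hp
      simp only [Finset.mem_filter, hQ3] at hp ⊢
      exact ⟨Finset.mem_univ _, hp.2.1, hp.2.2.2⟩
    · intro B hB
      simp only [Finset.mem_filter, hQ3] at hB ⊢
      exact ⟨by simp, hB.2.1, by trivial, hB.2.2⟩
    · intro p hp
      simp only [Finset.mem_filter, hQ3] at hp
      exact Prod.ext hp.2.2.1.symm rfl
    · intro B _; rfl
    · intro p hp
      simp only [Finset.mem_filter, hQ3] at hp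
      rw [hp.2.2.1]
      simp
end

section
/- For a ≥ 1 and t ∈ {0,1}, the complete bipartite graph K(a, a+t) and the graph H_t(a) have the same domination polynomial. -/
namespace DomAux

variable (a t : ℕ)

/-- set of left vertices -/
def AL : Finset (Fin a ⊕ Fin (a + t)) :=
  Finset.univ.image Sum.inl

/-- set of first `a` right vertices -/
def AR : Finset (Fin a ⊕ Fin (a + t)) :=
  Finset.univ.image (fun i : Fin a => Sum.inr (Fin.castLE (Nat.le_add_right a t) i))

variable {a t}

@[simp] lemma inl_mem_AL (i : Fin a) : (Sum.inl i : Fin a ⊕ Fin (a+t)) ∈ AL a t := by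
  simp [AL]

@[simp] lemma inr_not_mem_AL (j : Fin (a+t)) : (Sum.inr j : Fin a ⊕ Fin (a+t)) ∉ AL a t := by
  simp [AL]

@[simp] lemma inl_not_mem_AR (i : Fin a) : (Sum.inl i : Fin a ⊕ Fin (a+t)) ∉ AR a t := by
  simp [AR]

@[simp] lemma inr_mem_AR (j : Fin (a+t)) :
    (Sum.inr j : Fin a ⊕ Fin (a+t)) ∈ AR a t ↔ (j : ℕ) < a := by
  simp only [AR, Finset.mem_image, Finset.mem_univ, true_and]
  constructor
  · rintro ⟨i, h⟩
    have := Sum.inr.inj h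
    subst this
    exact i.2
  · intro h; exact ⟨⟨j, h⟩, by simp [Fin.ext_iff]⟩

lemma card_AL : (AL a t).card = a := by
  rw [AL, Finset.card_image_of_injective _ Sum.inl_injective]; simp

lemma card_AR : (AR a t).card = a := by
  rw [AR, Finset.card_image_of_injective _ ?_]
  · simp
  · intro x y h
    simpa [Fin.ext_iff] using h

lemma AL_ne_AR (ha : 1 ≤ a) : AL a t ≠ AR a t := fun h => by
  have := inl_mem_AL (a := a) (t := t) ⟨0, ha⟩
  rw [h] at this
  exact inl_not_mem_AR _ this

/-- the swap -/
def swap (S : Finset (Fin a ⊕ Fin (a + t))) : Finset (Fin a ⊕ Fin (a + t)) :=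
  if S = AL a t then AR a t else if S = AR a t then AL a t else S

lemma swap_swap (ha : 1 ≤ a) (S : Finset (Fin a ⊕ Fin (a + t))) : swap (swap S) = S := by
  unfold swap
  split_ifs with h1 h2 h3 h4 h5 <;>
    simp_all [AL_ne_AR ha, (AL_ne_AR ha).symm]

lemma card_swap (S : Finset (Fin a ⊕ Fin (a + t))) : (swap S).card = S.card := by
  unfold swap
  split_ifs with h1 h2 <;> simp_all [card_AL, card_AR]

lemma charG (S : Finset (Fin a ⊕ Fin (a + t))) :
    Dominates (completeBipartiteGraph (Fin a) (Fin (a + t))) ↑S ↔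
      ((∃ j, Sum.inr j ∈ S) ∨ ∀ i, Sum.inl i ∈ S) ∧
      ((∃ i, Sum.inl i ∈ S) ∨ ∀ j, Sum.inr j ∈ S) := by
  constructor
  · intro h
    constructor
    · by_cases hp : ∃ j, Sum.inr j ∈ S
      · exact Or.inl hp
      · refine Or.inr fun i => ?_
        rcases h (Sum.inl i) with hi | ⟨u, hu, hadj⟩
        · exact hi
        · cases u with
          | inl u => simp at hadj
          | inr u => exact absurd ⟨u, hu⟩ hp
    · by_cases hp : ∃ i, Sum.inl i ∈ S
      · exact Or.inl hp
      · refine Or.inr fun j => ?_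
        rcases h (Sum.inr j) with hj | ⟨u, hu, hadj⟩
        · exact hj
        · cases u with
          | inl u => exact absurd ⟨u, hu⟩ hp
          | inr u => simp at hadj
  · rintro ⟨h1, h2⟩ (i | j)
    · rcases h1 with ⟨j, hj⟩ | h1
      · exact Or.inr ⟨Sum.inr j, hj, by simp⟩
      · exact Or.inl (h1 i)
    · rcases h2 with ⟨i, hi⟩ | h2
      · exact Or.inr ⟨Sum.inl i, hi, by simp⟩
      · exact Or.inl (h2 j)

lemma charH (S : Finset (Fin a ⊕ Fin (a + t))) (ht : t ≤ 1) :
    Dominates (Hgraph a t) ↑S ↔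
      ((∃ i, Sum.inl i ∈ S) ∨ ∀ i : Fin a, Sum.inr (Fin.castLE (Nat.le_add_right a t) i) ∈ S) ∧
      ((∃ j, Sum.inr j ∈ S) ∨ (t = 0 ∧ ∀ i, Sum.inl i ∈ S)) := by
  constructor
  · intro h
    constructor
    · by_cases hp : ∃ i, Sum.inl i ∈ S
      · exact Or.inl hp
      · refine Or.inr fun i => ?_
        rcases h (Sum.inl i) with hi | ⟨u, hu, hadj⟩
        · exact absurd ⟨i, hi⟩ hp
        · cases u with
          | inl u => exact absurd ⟨u, hu⟩ hp
          | inr u =>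
            have h1 : (u : ℕ) = (i : ℕ) := hadj
            have h2 : Fin.castLE (Nat.le_add_right a t) i = u := by
              apply Fin.ext; simp [h1]
            rwa [h2]
    · by_cases hq : ∃ j, Sum.inr j ∈ S
      · exact Or.inl hq
      · have ht0 : t = 0 := by
          by_contra h0
          have h0 : t = 1 := by omega
          rcases h (Sum.inr ⟨a, by omega⟩) with hj | ⟨u, hu, hadj⟩
          · exact hq ⟨_, hj⟩
          · cases u with
            | inl u =>
              have : (a : ℕ) = (u : ℕ) := hadj
              have := u.2; omega
            | inr u => exact hq ⟨u, hu⟩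
        refine Or.inr ⟨ht0, fun i => ?_⟩
        rcases h (Sum.inr (Fin.castLE (Nat.le_add_right a t) i)) with hj | ⟨u, hu, hadj⟩
        · exact absurd ⟨_, hj⟩ hq
        · cases u with
          | inl u =>
            have h1 : ((Fin.castLE (Nat.le_add_right a t) i : Fin (a+t)) : ℕ) = (u : ℕ) := hadj
            have h2 : u = i := by apply Fin.ext; simpa using h1.symm
            rwa [h2] at hu
          | inr u => exact absurd ⟨u, hu⟩ hq
  · rintro ⟨h1, h2⟩ (i | j)
    · rcases h1 with ⟨i', hi'⟩ | h1
      · by_cases hii : i' = i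
        · exact Or.inl (hii ▸ hi')
        · exact Or.inr ⟨Sum.inl i', hi', hii⟩
      · refine Or.inr ⟨Sum.inr (Fin.castLE (Nat.le_add_right a t) i), h1 i, ?_⟩
        show ((Fin.castLE (Nat.le_add_right a t) i : Fin (a+t)) : ℕ) = (i : ℕ)
        simp
    · rcases h2 with ⟨j', hj'⟩ | ⟨ht0, hall⟩
      · by_cases hjj : j' = j
        · exact Or.inl (hjj ▸ hj')
        · exact Or.inr ⟨Sum.inr j', hj', hjj⟩
      · have hja : (j : ℕ) < a := by have := j.2; omega
        refine Or.inr ⟨Sum.inl ⟨j, hja⟩, hall _, ?_⟩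
        show (j : ℕ) = ((⟨(j : ℕ), hja⟩ : Fin a) : ℕ)
        rfl

lemma key (ha : 1 ≤ a) (ht : t ≤ 1) (S : Finset (Fin a ⊕ Fin (a + t))) :
    Dominates (completeBipartiteGraph (Fin a) (Fin (a + t))) ↑S ↔
      Dominates (Hgraph a t) ↑(swap S) := by
  have hcast0 : ((Fin.castLE (Nat.le_add_right a t) (⟨0, ha⟩ : Fin a) : Fin (a+t)) : ℕ) < a := by
    simpa using Nat.lt_of_lt_of_le Nat.zero_lt_one ha
  rw [charG, charH _ ht]
  unfold swap
  split_ifs with h1 h2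
  · subst h1
    refine iff_of_true ⟨Or.inr fun i => inl_mem_AL i, Or.inl ⟨⟨0, ha⟩, inl_mem_AL _⟩⟩
      ⟨Or.inr fun i => (inr_mem_AR _).mpr (by simp), ?_⟩
    exact Or.inl ⟨_, (inr_mem_AR _).mpr hcast0⟩
  · subst h2
    constructor
    · rintro ⟨-, h⟩
      have ht0 : t = 0 := by
        rcases h with ⟨i, hi⟩ | h
        · exact absurd hi (inl_not_mem_AR i)
        · by_contra h0
          have := (inr_mem_AR (⟨a, by omega⟩ : Fin (a+t))).mp (h _)
          simp at this
      exact ⟨Or.inl ⟨⟨0, ha⟩, inl_mem_AL _⟩, Or.inr ⟨ht0, fun i => inl_mem_AL i⟩⟩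
    · rintro ⟨-, h⟩
      have ht0 : t = 0 := by
        rcases h with ⟨j, hj⟩ | ⟨ht0, -⟩
        · exact absurd hj (inr_not_mem_AL j)
        · exact ht0
      refine ⟨Or.inl ⟨_, (inr_mem_AR _).mpr hcast0⟩, Or.inr fun j => ?_⟩
      rw [inr_mem_AR]
      have := j.2; omega
  · -- S ≠ AL, S ≠ AR
    by_cases hL : ∃ i, Sum.inl i ∈ S
    · by_cases hR : ∃ j, Sum.inr j ∈ S
      · exact iff_of_true ⟨Or.inl hR, Or.inl hL⟩ ⟨Or.inl hL, Or.inl hR⟩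
      · -- pL, ¬pR : both sides false since S ≠ AL
        have hSAL : (∀ i, Sum.inl i ∈ S) → S = AL a t := by
          intro hall
          ext x
          cases x with
          | inl i => exact iff_of_true (hall i) (inl_mem_AL i)
          | inr j => exact iff_of_false (fun h => hR ⟨j, h⟩) (inr_not_mem_AL j)
        refine iff_of_false ?_ ?_
        · rintro ⟨c1, -⟩
          rcases c1 with hc | hc
          · exact hR hc
          · exact h1 (hSAL hc)
        · rintro ⟨-, c2⟩
          rcases c2 with hc | ⟨-, hc⟩
          · exact hR hc
          · exact h1 (hSAL hc)
    · -- ¬pL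
      have hA' : (∀ i : Fin a, Sum.inr (Fin.castLE (Nat.le_add_right a t) i) ∈ S) →
          ∀ j : Fin (a + t), Sum.inr j ∈ S := by
        intro hall
        by_contra hno
        push_neg at hno
        obtain ⟨j, hj⟩ := hno
        have hja : a ≤ (j : ℕ) := by
          by_contra hlt
          push_neg at hlt
          have := hall ⟨j, hlt⟩
          have he : Fin.castLE (Nat.le_add_right a t) (⟨(j : ℕ), hlt⟩ : Fin a) = j :=
            Fin.ext rfl
          rw [he] at this
          exact hj this
        apply h2
        ext x
        cases x with
        | inl i => exact iff_of_false (fun h => hL ⟨i, h⟩) (inl_not_mem_AR i)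
        | inr j' =>
          rw [inr_mem_AR]
          constructor
          · intro hj'
            by_contra hge
            push_neg at hge
            have : j' = j := by
              apply Fin.ext
              have := j.2; have := j'.2; omega
            exact hj (this ▸ hj')
          · intro hlt
            have := hall ⟨j', hlt⟩
            have he : Fin.castLE (Nat.le_add_right a t) (⟨(j' : ℕ), hlt⟩ : Fin a) = j' :=
              Fin.ext rfl
            rwa [he] at this
      constructor
      · rintro ⟨-, c2⟩
        have hallR : ∀ j, Sum.inr j ∈ S := by
          rcases c2 with hc | hc
          · exact absurd hc hL
          · exact hc
        exact ⟨Or.inr fun i => hallR _, Or.inl ⟨⟨0, by omega⟩, hallR _⟩⟩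
      · rintro ⟨d1, -⟩
        have hallA' : ∀ i : Fin a, Sum.inr (Fin.castLE (Nat.le_add_right a t) i) ∈ S := by
          rcases d1 with hc | hc
          · exact absurd hc hL
          · exact hc
        have hallR := hA' hallA'
        exact ⟨Or.inl ⟨⟨0, by omega⟩, hallR _⟩, Or.inr hallR⟩

lemma numDom_eq (ha : 1 ≤ a) (ht : t ≤ 1) (i : ℕ) :
    numDom (completeBipartiteGraph (Fin a) (Fin (a + t))) i = numDom (Hgraph a t) i := by
  unfold numDom
  apply Nat.card_congr
  refine ⟨fun S => ⟨swap S.1, ?_, ?_⟩, fun S => ⟨swap S.1, ?_, ?_⟩, ?_, ?_⟩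
  · rw [card_swap]; exact S.2.1
  · exact (key ha ht S.1).mp S.2.2
  · rw [card_swap]; exact S.2.1
  · have := (key ha ht (swap S.1))
    rw [swap_swap ha] at this
    exact this.mpr S.2.2
  · intro S; ext1; exact swap_swap ha S.1
  · intro S; ext1; exact swap_swap ha S.1

end DomAux

/-- For `a ≥ 1` and `t ∈ {0,1}`, `D(K(a,a+t),x) = D(H_t(a),x)`. -/
theorem domPoly_completeBipartite_eq_Hgraph (a t : ℕ) (ha : 1 ≤ a) (ht : t ≤ 1) :
    domPoly (completeBipartiteGraph (Fin a) (Fin (a + t))) =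
      domPoly (Hgraph a t) := by
  unfold domPoly
  refine Finset.sum_congr rfl fun i _ => ?_
  rw [DomAux.numDom_eq ha ht]
end

section
/- If a₁ ≤ a₂ with a₂ ≥ 3 and a₂ − a₁ ≤ 1, then the complete multipartite graph K(a₁, a₂, …, a_r) is not D-unique: the graph H = H_{a₂−a₁}(a₁) ∨ K(a₃,…,a_r) satisfies D(H,x) = D(K(a₁,…,a_r),x) but is not isomorphic to K(a₁,…,a_r). -/
namespace NotDUniqueAux

open Sum

section adj
variable {V W : Type*} {G : SimpleGraph V} {M : SimpleGraph W} {a t : ℕ}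

@[simp] lemma gjoin_ll (x y : V) : (GJoin G M).Adj (inl x) (inl y) ↔ G.Adj x y := Iff.rfl
@[simp] lemma gjoin_lr (x : V) (y : W) : (GJoin G M).Adj (inl x) (inr y) := trivial
@[simp] lemma gjoin_rl (x : W) (y : V) : (GJoin G M).Adj (inr x) (inl y) := trivial
@[simp] lemma gjoin_rr (x y : W) : (GJoin G M).Adj (inr x) (inr y) ↔ M.Adj x y := Iff.rfl
@[simp] lemma hg_ll (i j : Fin a) : (Hgraph a t).Adj (inl i) (inl j) ↔ i ≠ j := Iff.rfl
@[simp] lemma hg_lr (i : Fin a) (j : Fin (a+t)) :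
    (Hgraph a t).Adj (inl i) (inr j) ↔ (j:ℕ) = (i:ℕ) := Iff.rfl
@[simp] lemma hg_rl (i : Fin (a+t)) (j : Fin a) :
    (Hgraph a t).Adj (inr i) (inl j) ↔ (i:ℕ) = (j:ℕ) := Iff.rfl
@[simp] lemma hg_rr (i j : Fin (a+t)) : (Hgraph a t).Adj (inr i) (inr j) ↔ i ≠ j := Iff.rfl
end adj

section join
variable {V W : Type*} {G G' : SimpleGraph V} {M : SimpleGraph W}

lemma dom_join_congr {S : Set (V ⊕ W)} (w : W) (hw : inr w ∈ S) :
    Dominates (GJoin G M) S ↔ Dominates (GJoin G' M) S := by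
  have key : ∀ (G₁ G₂ : SimpleGraph V), Dominates (GJoin G₁ M) S → Dominates (GJoin G₂ M) S := by
    intro G₁ G₂ hd v
    match v with
    | inl v => exact Or.inr ⟨inr w, hw, trivial⟩
    | inr v =>
      rcases hd (inr v) with h | ⟨u, hu, hadj⟩
      · exact Or.inl h
      · match u with
        | inl u => exact Or.inr ⟨inl u, hu, trivial⟩
        | inr u => exact Or.inr ⟨inr u, hu, hadj⟩
  exact ⟨key G G', key G' G⟩

lemma dom_join_inl [Nonempty V] {S : Set (V ⊕ W)} (hS : ∀ x ∈ S, ∃ v, x = inl v) :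
    Dominates (GJoin G M) S ↔ Dominates G (inl ⁻¹' S) := by
  constructor
  · intro hd v
    rcases hd (inl v) with h | ⟨u, hu, hadj⟩
    · exact Or.inl h
    · obtain ⟨u', rfl⟩ := hS u hu
      exact Or.inr ⟨u', hu, by simpa using hadj⟩
  · intro hd v
    have hne : ∃ v₀, inl v₀ ∈ S := by
      obtain ⟨v₀⟩ := ‹Nonempty V›
      rcases hd v₀ with h | ⟨u, hu, _⟩
      · exact ⟨v₀, h⟩
      · exact ⟨u, hu⟩
    obtain ⟨v₀, hv₀⟩ := hne
    match v with
    | inl v =>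
      rcases hd v with h | ⟨u, hu, hadj⟩
      · exact Or.inl h
      · exact Or.inr ⟨inl u, hu, by simpa using hadj⟩
    | inr v => exact Or.inr ⟨inl v₀, hv₀, trivial⟩

lemma numDom_congr_of_equiv [Fintype V] [Fintype W]
    (e : Equiv.Perm (Finset (V ⊕ W)))
    (hcard : ∀ S, (e S).card = S.card)
    (hdom : ∀ S : Finset (V ⊕ W),
      (Dominates (GJoin G M) ↑S ↔ Dominates (GJoin G' M) ↑(e S))) (i : ℕ) :
    numDom (GJoin G M) i = numDom (GJoin G' M) i := by
  unfold numDom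
  apply Nat.card_congr
  exact Equiv.subtypeEquiv e (fun S => by rw [hcard, hdom])

end join

lemma dom_core0 (a : ℕ) (ha : 2 ≤ a) (T : Set (Fin a ⊕ Fin (a + 0))) :
    Dominates (Hgraph a 0) T ↔ Dominates (completeBipartiteGraph (Fin a) (Fin (a + 0))) T := by
  by_cases hl : ∃ i, inl i ∈ T
  · by_cases hr : ∃ j, inr j ∈ T
    · obtain ⟨i₀, hi₀⟩ := hl
      obtain ⟨j₀, hj₀⟩ := hr
      constructor <;> intro _ v
      · match v with
        | inl i => exact Or.inr ⟨inr j₀, hj₀, by simp⟩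
        | inr j => exact Or.inr ⟨inl i₀, hi₀, by simp⟩
      · match v with
        | inl i =>
          by_cases h : inl i ∈ T
          · exact Or.inl h
          · exact Or.inr ⟨inl i₀, hi₀, by intro e; rw [e] at hi₀; exact h hi₀⟩
        | inr j =>
          by_cases h : inr j ∈ T
          · exact Or.inl h
          · exact Or.inr ⟨inr j₀, hj₀, by intro e; rw [e] at hj₀; exact h hj₀⟩
    · have keyH : Dominates (Hgraph a 0) T → ∀ i : Fin a, inl i ∈ T := by
        intro hd i
        rcases hd (inr i) with h | ⟨u, hu, hadj⟩
        · exact absurd ⟨i, h⟩ hr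
        · match u with
          | inl u => rw [hg_lr] at hadj; rwa [Fin.ext hadj.symm] at hu
          | inr u => exact absurd ⟨u, hu⟩ hr
      have keyK : Dominates (completeBipartiteGraph (Fin a) (Fin (a+0))) T →
          ∀ i : Fin a, inl i ∈ T := by
        intro hd i
        rcases hd (inl i) with h | ⟨u, hu, hadj⟩
        · exact h
        · match u with
          | inl u => simp at hadj
          | inr u => exact absurd ⟨u, hu⟩ hr
      have backH : (∀ i : Fin a, inl i ∈ T) → Dominates (Hgraph a 0) T := by
        intro h v
        match v with
        | inl i => exact Or.inl (h i)
        | inr j => exact Or.inr ⟨inl j, h j, rfl⟩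
      have backK : (∀ i : Fin a, inl i ∈ T) →
          Dominates (completeBipartiteGraph (Fin a) (Fin (a+0))) T := by
        intro h v
        match v with
        | inl i => exact Or.inl (h i)
        | inr j => exact Or.inr ⟨inl ⟨0, by omega⟩, h _, by simp⟩
      exact ⟨fun hd => backK (keyH hd), fun hd => backH (keyK hd)⟩
  · by_cases hr : ∃ j, inr j ∈ T
    · have keyH : Dominates (Hgraph a 0) T → ∀ j : Fin (a+0), inr j ∈ T := by
        intro hd j
        rcases hd (inl j) with h | ⟨u, hu, hadj⟩
        · exact absurd ⟨j, h⟩ hl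
        · match u with
          | inl u => exact absurd ⟨u, hu⟩ hl
          | inr u => rw [hg_rl] at hadj; rwa [Fin.ext hadj] at hu
      have keyK : Dominates (completeBipartiteGraph (Fin a) (Fin (a+0))) T →
          ∀ j : Fin (a+0), inr j ∈ T := by
        intro hd j
        rcases hd (inr j) with h | ⟨u, hu, hadj⟩
        · exact h
        · match u with
          | inl u => exact absurd ⟨u, hu⟩ hl
          | inr u => simp at hadj
      have backH : (∀ j : Fin (a+0), inr j ∈ T) → Dominates (Hgraph a 0) T := by
        intro h v
        match v with
        | inl i => exact Or.inr ⟨inr i, h i, rfl⟩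
        | inr j => exact Or.inl (h j)
      have backK : (∀ j : Fin (a+0), inr j ∈ T) →
          Dominates (completeBipartiteGraph (Fin a) (Fin (a+0))) T := by
        intro h v
        match v with
        | inl i => exact Or.inr ⟨inr ⟨0, by omega⟩, h _, by simp⟩
        | inr j => exact Or.inl (h j)
      exact ⟨fun hd => backK (keyH hd), fun hd => backH (keyK hd)⟩
    · have key : ∀ (G : SimpleGraph (Fin a ⊕ Fin (a+0))), ¬ Dominates G T := by
        intro G hd
        rcases hd (inl ⟨0, by omega⟩) with h | ⟨u, hu, _⟩
        · exact absurd ⟨_, h⟩ hl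
        · match u with
          | inl u => exact absurd ⟨u, hu⟩ hl
          | inr u => exact absurd ⟨u, hu⟩ hr
      exact ⟨fun hd => absurd hd (key _), fun hd => absurd hd (key _)⟩

lemma dom_core1 (a : ℕ) (ha : 2 ≤ a) (T : Set (Fin a ⊕ Fin (a + 1)))
    (hA : T ≠ Set.range inl)
    (hM : T ≠ Set.range (fun i : Fin a => inr i.castSucc)) :
    Dominates (Hgraph a 1) T ↔ Dominates (completeBipartiteGraph (Fin a) (Fin (a + 1))) T := by
  by_cases hl : ∃ i, inl i ∈ T
  · by_cases hr : ∃ j, inr j ∈ T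
    · obtain ⟨i₀, hi₀⟩ := hl
      obtain ⟨j₀, hj₀⟩ := hr
      constructor <;> intro _ v
      · match v with
        | inl i => exact Or.inr ⟨inr j₀, hj₀, by simp⟩
        | inr j => exact Or.inr ⟨inl i₀, hi₀, by simp⟩
      · match v with
        | inl i =>
          by_cases h : inl i ∈ T
          · exact Or.inl h
          · exact Or.inr ⟨inl i₀, hi₀, by intro e; rw [e] at hi₀; exact h hi₀⟩
        | inr j =>
          by_cases h : inr j ∈ T
          · exact Or.inl h
          · exact Or.inr ⟨inr j₀, hj₀, by intro e; rw [e] at hj₀; exact h hj₀⟩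
    · have keyH : ¬ Dominates (Hgraph a 1) T := by
        intro hd
        rcases hd (inr (Fin.last a)) with h | ⟨u, hu, hadj⟩
        · exact absurd ⟨_, h⟩ hr
        · match u with
          | inl u => rw [hg_lr] at hadj; simp [Fin.last] at hadj; omega
          | inr u => exact absurd ⟨u, hu⟩ hr
      have keyK : ¬ Dominates (completeBipartiteGraph (Fin a) (Fin (a+1))) T := by
        intro hd
        apply hA
        ext x
        match x with
        | inl i =>
          simp only [Set.mem_range]
          refine ⟨fun _ => ⟨i, rfl⟩, fun _ => ?_⟩
          rcases hd (inl i) with h | ⟨u, hu, hadj⟩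
          · exact h
          · match u with
            | inl u => simp at hadj
            | inr u => exact absurd ⟨u, hu⟩ hr
        | inr j =>
          simp only [Set.mem_range]
          constructor
          · intro h; exact absurd ⟨j, h⟩ hr
          · rintro ⟨i, h⟩; exact absurd h (by simp)
      exact ⟨fun hd => absurd hd keyH, fun hd => absurd hd keyK⟩
  · by_cases hr : ∃ j, inr j ∈ T
    · have keyH : Dominates (Hgraph a 1) T →
          Dominates (completeBipartiteGraph (Fin a) (Fin (a+1))) T := by
        intro hd
        have hcast : ∀ i : Fin a, inr i.castSucc ∈ T := by
          intro i
          rcases hd (inl i) with h | ⟨u, hu, hadj⟩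
          · exact absurd ⟨i, h⟩ hl
          · match u with
            | inl u => exact absurd ⟨u, hu⟩ hl
            | inr u =>
              rw [hg_rl] at hadj
              have : u = i.castSucc := Fin.ext (by simpa using hadj)
              rwa [this] at hu
        have hlast : inr (Fin.last a) ∈ T := by
          by_contra hlast
          apply hM
          ext x
          match x with
          | inl i =>
            simp only [Set.mem_range]
            constructor
            · intro h; exact absurd ⟨i, h⟩ hl
            · rintro ⟨i, h⟩; exact absurd h (by simp)
          | inr j =>
            simp only [Set.mem_range]
            constructor
            · intro h
              have hj : (j:ℕ) < a := by
                rcases Nat.lt_or_ge (j:ℕ) a with h' | h'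
                · exact h'
                · exfalso
                  have hjl : j = Fin.last a := Fin.ext (by simp [Fin.last]; omega)
                  rw [hjl] at h; exact hlast h
              exact ⟨⟨(j:ℕ), hj⟩, by simp [Fin.ext_iff]⟩
            · rintro ⟨i, h⟩
              have h' : inr i.castSucc = (inr j : Fin a ⊕ Fin (a+1)) := h
              rw [← h']; exact hcast i
        have hall : ∀ j : Fin (a+1), inr j ∈ T := by
          intro j
          rcases Nat.lt_or_ge (j:ℕ) a with h' | h'
          · have hj : j = (⟨(j:ℕ), h'⟩ : Fin a).castSucc := Fin.ext (by simp)
            rw [hj]; exact hcast _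
          · have hj : j = Fin.last a := Fin.ext (by simp [Fin.last]; omega)
            rw [hj]; exact hlast
        intro v
        match v with
        | inl i => exact Or.inr ⟨inr (Fin.last a), hlast, by simp⟩
        | inr j => exact Or.inl (hall j)
      have keyK : Dominates (completeBipartiteGraph (Fin a) (Fin (a+1))) T →
          Dominates (Hgraph a 1) T := by
        intro hd
        have hall : ∀ j : Fin (a+1), inr j ∈ T := by
          intro j
          rcases hd (inr j) with h | ⟨u, hu, hadj⟩
          · exact h
          · match u with
            | inl u => exact absurd ⟨u, hu⟩ hl
            | inr u => simp at hadj
        intro v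
        match v with
        | inl i => exact Or.inr ⟨inr i.castSucc, hall _, by simp⟩
        | inr j => exact Or.inl (hall j)
      exact ⟨keyH, keyK⟩
    · have key : ∀ (G : SimpleGraph (Fin a ⊕ Fin (a+1))), ¬ Dominates G T := by
        intro G hd
        rcases hd (inl ⟨0, by omega⟩) with h | ⟨u, hu, _⟩
        · exact absurd ⟨_, h⟩ hl
        · match u with
          | inl u => exact absurd ⟨u, hu⟩ hl
          | inr u => exact absurd ⟨u, hu⟩ hr
      exact ⟨fun hd => absurd hd (key _), fun hd => absurd hd (key _)⟩

lemma numdom0 (a : ℕ) (ha : 2 ≤ a) {W : Type*} [Fintype W] (M : SimpleGraph W) (i : ℕ) :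
    numDom (GJoin (Hgraph a 0) M) i
      = numDom (GJoin (completeBipartiteGraph (Fin a) (Fin (a + 0))) M) i := by
  apply numDom_congr_of_equiv (Equiv.refl _) (fun _ => rfl)
  intro S
  simp only [Equiv.refl_apply]
  by_cases hw : ∃ w : W, inr w ∈ (↑S : Set ((Fin a ⊕ Fin (a+0)) ⊕ W))
  · obtain ⟨w, hw⟩ := hw
    exact dom_join_congr w hw
  · have hS : ∀ x ∈ (↑S : Set ((Fin a ⊕ Fin (a+0)) ⊕ W)), ∃ v, x = inl v := by
      intro x hx
      match x with
      | inl v => exact ⟨v, rfl⟩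
      | inr w => exact absurd ⟨w, hx⟩ hw
    have : Nonempty (Fin a ⊕ Fin (a+0)) := ⟨inl ⟨0, by omega⟩⟩
    rw [dom_join_inl hS, dom_join_inl hS]
    exact dom_core0 a ha _

lemma numdom1 (a : ℕ) (ha : 2 ≤ a) {W : Type*} [Fintype W] [DecidableEq W]
    (M : SimpleGraph W) (i : ℕ) :
    numDom (GJoin (Hgraph a 1) M) i
      = numDom (GJoin (completeBipartiteGraph (Fin a) (Fin (a + 1))) M) i := by
  classical
  obtain ⟨A, hAdef⟩ : ∃ A' : Finset ((Fin a ⊕ Fin (a+1)) ⊕ W),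
      A' = Finset.univ.image (fun i : Fin a => inl (inl i)) := ⟨_, rfl⟩
  obtain ⟨B, hBdef⟩ : ∃ B' : Finset ((Fin a ⊕ Fin (a+1)) ⊕ W),
      B' = Finset.univ.image (fun i : Fin a => inl (inr i.castSucc)) := ⟨_, rfl⟩
  have memA : ∀ x, x ∈ A ↔ ∃ i : Fin a, x = inl (inl i) := by
    intro x; simp [hAdef, eq_comm]
  have memB : ∀ x, x ∈ B ↔ ∃ i : Fin a, x = inl (inr i.castSucc) := by
    intro x; simp [hBdef, eq_comm]
  have cardA : A.card = a := by
    rw [hAdef, Finset.card_image_of_injective _ (fun x y h => by simpa using h)]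
    simp
  have cardB : B.card = a := by
    rw [hBdef, Finset.card_image_of_injective _
      (fun x y h => Fin.castSucc_injective a (by simpa using h))]
    simp
  have hAB : A ≠ B := by
    intro h
    have h0 : (inl (inl ⟨0, by omega⟩) : (Fin a ⊕ Fin (a+1)) ⊕ W) ∈ A := (memA _).2 ⟨_, rfl⟩
    obtain ⟨j, hj⟩ := (memB _).1 ((Finset.ext_iff.mp h _).1 h0)
    exact absurd hj (by simp)
  obtain ⟨σ, hσ⟩ : ∃ σ' : Finset ((Fin a ⊕ Fin (a+1)) ⊕ W) → Finset ((Fin a ⊕ Fin (a+1)) ⊕ W),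
      σ' = fun S => if S = A then B else if S = B then A else S := ⟨_, rfl⟩
  have hinv : Function.Involutive σ := by
    intro S
    by_cases h1 : S = A
    · rw [h1]; simp [hσ, hAB.symm]
    · by_cases h2 : S = B
      · rw [h2]; simp [hσ, hAB, hAB.symm]
      · simp [hσ, h1, h2]
  apply numDom_congr_of_equiv hinv.toPerm
  · intro S
    show (σ S).card = S.card
    by_cases h1 : S = A
    · rw [h1, show σ A = B by simp [hσ], cardA, cardB]
    · by_cases h2 : S = B
      · rw [h2, show σ B = A by simp [hσ, hAB.symm], cardA, cardB]
      · rw [show σ S = S by simp [hσ, h1, h2]]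
  · intro S
    simp only [Function.Involutive.coe_toPerm]
    by_cases h1 : S = A
    · rw [h1, show σ A = B by simp [hσ]]
      apply iff_of_false
      · intro hd
        rcases hd (inl (inr (Fin.last a))) with h | ⟨u, hu, hadj⟩
        · rw [Finset.mem_coe, memA] at h
          obtain ⟨j, hj⟩ := h
          exact absurd hj (by simp)
        · rw [Finset.mem_coe, memA] at hu
          obtain ⟨j, rfl⟩ := hu
          have : ((Fin.last a : Fin (a+1)) : ℕ) = (j : ℕ) := hadj
          simp [Fin.last] at this
          omega
      · intro hd
        rcases hd (inl (inr (Fin.last a))) with h | ⟨u, hu, hadj⟩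
        · rw [Finset.mem_coe, memB] at h
          obtain ⟨j, hj⟩ := h
          have := hj
          simp [Fin.ext_iff, Fin.last] at this
          omega
        · rw [Finset.mem_coe, memB] at hu
          obtain ⟨j, rfl⟩ := hu
          have : (completeBipartiteGraph (Fin a) (Fin (a+1))).Adj
            (inr j.castSucc) (inr (Fin.last a)) := hadj
          simp at this
    · by_cases h2 : S = B
      · rw [h2, show σ B = A by simp [hσ, hAB.symm]]
        apply iff_of_true
        · intro v
          match v with
          | inl (inl j) =>
            refine Or.inr ⟨inl (inr j.castSucc), ?_, by simp⟩
            rw [Finset.mem_coe, memB]; exact ⟨j, rfl⟩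
          | inl (inr j) =>
            by_cases hj : (j:ℕ) = 0
            · refine Or.inr ⟨inl (inr (⟨1, by omega⟩ : Fin a).castSucc), ?_, ?_⟩
              · rw [Finset.mem_coe, memB]; exact ⟨_, rfl⟩
              · simp [Fin.ext_iff]; omega
            · refine Or.inr ⟨inl (inr (⟨0, by omega⟩ : Fin a).castSucc), ?_, ?_⟩
              · rw [Finset.mem_coe, memB]; exact ⟨_, rfl⟩
              · simp [Fin.ext_iff]; omega
          | inr w =>
            refine Or.inr ⟨inl (inr (⟨0, by omega⟩ : Fin a).castSucc), ?_, trivial⟩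
            rw [Finset.mem_coe, memB]; exact ⟨_, rfl⟩
        · intro v
          match v with
          | inl (inl j) =>
            refine Or.inl ?_
            rw [Finset.mem_coe, memA]; exact ⟨j, rfl⟩
          | inl (inr j) =>
            refine Or.inr ⟨inl (inl ⟨0, by omega⟩), ?_, by simp⟩
            rw [Finset.mem_coe, memA]; exact ⟨_, rfl⟩
          | inr w =>
            refine Or.inr ⟨inl (inl ⟨0, by omega⟩), ?_, trivial⟩
            rw [Finset.mem_coe, memA]; exact ⟨_, rfl⟩
      · rw [show σ S = S by simp [hσ, h1, h2]]
        by_cases hw : ∃ w : W, inr w ∈ (↑S : Set ((Fin a ⊕ Fin (a+1)) ⊕ W))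
        · obtain ⟨w, hw⟩ := hw
          exact dom_join_congr w hw
        · have hS : ∀ x ∈ (↑S : Set ((Fin a ⊕ Fin (a+1)) ⊕ W)), ∃ v, x = inl v := by
            intro x hx
            match x with
            | inl v => exact ⟨v, rfl⟩
            | inr w => exact absurd ⟨w, hx⟩ hw
          have : Nonempty (Fin a ⊕ Fin (a+1)) := ⟨inl ⟨0, by omega⟩⟩
          rw [dom_join_inl hS, dom_join_inl hS]
          apply dom_core1 a ha
          · intro hT
            apply h1
            ext x
            rw [memA]
            constructor
            · intro hx
              obtain ⟨v, rfl⟩ := hS x hx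
              have hv : v ∈ Set.range (inl : Fin a → Fin a ⊕ Fin (a+1)) := by
                rw [← hT]; exact hx
              obtain ⟨i, rfl⟩ := hv
              exact ⟨i, rfl⟩
            · rintro ⟨i, rfl⟩
              have : (inl i : Fin a ⊕ Fin (a+1)) ∈ (inl ⁻¹' (↑S : Set ((Fin a ⊕ Fin (a+1)) ⊕ W))) := by
                rw [hT]; exact ⟨i, rfl⟩
              exact this
          · intro hT
            apply h2
            ext x
            rw [memB]
            constructor
            · intro hx
              obtain ⟨v, rfl⟩ := hS x hx
              have hv : v ∈ Set.range (fun i : Fin a => (inr i.castSucc : Fin a ⊕ Fin (a+1))) := by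
                rw [← hT]; exact hx
              obtain ⟨i, hi⟩ := hv
              exact ⟨i, by rw [← hi]⟩
            · rintro ⟨i, rfl⟩
              have : (inr i.castSucc : Fin a ⊕ Fin (a+1)) ∈ (inl ⁻¹' (↑S : Set ((Fin a ⊕ Fin (a+1)) ⊕ W))) := by
                rw [hT]; exact ⟨i, rfl⟩
              exact this

lemma no_bad_triple {α β ι : Type*} {f : ι → Type*}
    (x y z : (α ⊕ β) ⊕ (Σ i, f i)) (hxy : x ≠ y) (hyz : y ≠ z)
    (h1 : ¬(GJoin (completeBipartiteGraph α β) (SimpleGraph.completeMultipartiteGraph f)).Adj x y)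
    (h2 : ¬(GJoin (completeBipartiteGraph α β) (SimpleGraph.completeMultipartiteGraph f)).Adj y z) :
    ¬(GJoin (completeBipartiteGraph α β) (SimpleGraph.completeMultipartiteGraph f)).Adj x z := by
  rcases x with (x|x)|x <;> rcases y with (y|y)|y <;> rcases z with (z|z)|z <;>
    simp_all [GJoin, SimpleGraph.completeMultipartiteGraph]

lemma bad_triple_H {a t : ℕ} {W : Type*} (M : SimpleGraph W) (ha : 2 ≤ a) (hat : 3 ≤ a + t) :
    ∃ x y z, x ≠ y ∧ y ≠ z ∧
      ¬(GJoin (Hgraph a t) M).Adj x y ∧ ¬(GJoin (Hgraph a t) M).Adj y z ∧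
      (GJoin (Hgraph a t) M).Adj x z := by
  refine ⟨inl (inl ⟨0, by omega⟩), inl (inr ⟨2, by omega⟩), inl (inl ⟨1, by omega⟩),
    ?_, ?_, ?_, ?_, ?_⟩
  · simp
  · simp
  · simp [GJoin, Hgraph]
  · simp [GJoin, Hgraph]
  · simp [GJoin, Hgraph, Fin.ext_iff]

lemma main_general (a t : ℕ) (ha : 2 ≤ a) (h3 : 3 ≤ a + t) (htle : t ≤ 1)
    {m : ℕ} (b : Fin m → ℕ) :
    domPoly (GJoin (Hgraph a t)
        (SimpleGraph.completeMultipartiteGraph fun i => Fin (b i))) =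
      domPoly (GJoin (completeBipartiteGraph (Fin a) (Fin (a + t)))
        (SimpleGraph.completeMultipartiteGraph fun i => Fin (b i))) ∧
    ¬ Nonempty ((GJoin (Hgraph a t)
        (SimpleGraph.completeMultipartiteGraph fun i => Fin (b i))) ≃g
      (GJoin (completeBipartiteGraph (Fin a) (Fin (a + t)))
        (SimpleGraph.completeMultipartiteGraph fun i => Fin (b i)))) := by
  constructor
  · have hnum : ∀ i, numDom (GJoin (Hgraph a t)
        (SimpleGraph.completeMultipartiteGraph fun i => Fin (b i))) i =
        numDom (GJoin (completeBipartiteGraph (Fin a) (Fin (a + t)))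
        (SimpleGraph.completeMultipartiteGraph fun i => Fin (b i))) i := by
      interval_cases t
      · exact fun i => numdom0 a ha _ i
      · exact fun i => numdom1 a ha _ i
    unfold domPoly
    exact Finset.sum_congr rfl fun i _ => by rw [hnum i]
  · rintro ⟨e⟩
    obtain ⟨x, y, z, hxy, hyz, h1, h2, h3'⟩ := bad_triple_H
      (SimpleGraph.completeMultipartiteGraph fun i => Fin (b i)) ha h3
    refine no_bad_triple (e x) (e y) (e z)
      (fun h => hxy (e.toEquiv.injective h)) (fun h => hyz (e.toEquiv.injective h))
      (fun h => h1 (e.map_adj_iff.mp h)) (fun h => h2 (e.map_adj_iff.mp h))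
      (e.map_adj_iff.mpr h3')

end NotDUniqueAux

/-- If `a₁ ≤ a₂`, `a₂ ≥ 3` and `a₂ − a₁ ≤ 1`, then the complete multipartite graph
`K(a₁,a₂,b₁,…,b_m)` is not `D`-unique: `H_{a₂−a₁}(a₁) ∨ K(b₁,…,b_m)` has the same
domination polynomial but is not isomorphic to it. -/
theorem not_D_unique_of_close_sizes (a₁ a₂ : ℕ) (h12 : a₁ ≤ a₂) (h3 : 3 ≤ a₂)
    (hd : a₂ - a₁ ≤ 1) {m : ℕ} (b : Fin m → ℕ) (hb : ∀ i, 0 < b i) :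
    domPoly (GJoin (Hgraph a₁ (a₂ - a₁))
        (SimpleGraph.completeMultipartiteGraph fun i => Fin (b i))) =
      domPoly (GJoin (completeBipartiteGraph (Fin a₁) (Fin a₂))
        (SimpleGraph.completeMultipartiteGraph fun i => Fin (b i))) ∧
    ¬ Nonempty ((GJoin (Hgraph a₁ (a₂ - a₁))
        (SimpleGraph.completeMultipartiteGraph fun i => Fin (b i))) ≃g
      (GJoin (completeBipartiteGraph (Fin a₁) (Fin a₂))
        (SimpleGraph.completeMultipartiteGraph fun i => Fin (b i)))) := by
  obtain ⟨t, rfl⟩ : ∃ t, a₂ = a₁ + t := ⟨a₂ - a₁, by omega⟩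
  have h2 : 2 ≤ a₁ := by omega
  have h3' : 3 ≤ a₁ + t := by omega
  have htle : a₁ + t - a₁ ≤ 1 := hd
  generalize hgen : a₁ + t - a₁ = u at htle ⊢
  obtain rfl : u = t := by omega
  exact NotDUniqueAux.main_general _ _ (by omega) (by omega) (by omega) b
end

section
/- For r ≥ 2, a ≥ r+2, and 0 ≤ t ≤ ⌊r/2⌋, the graph J_r(a,t) = (⋁_{i=1}^{t} H_0(a)) ∨ K_{r−2t}(a) has the same domination polynomial as K_r(a). -/
/-- `J_r(a,t)`: the join of `t` disjoint copies of `H_0(a)` (occupying the pairs of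
classes `{0,1},…,{2t-2,2t-1}`) with the complete `(r-2t)`-partite graph with classes
of size `a`.  The vertex `(i,x)` is the `x`-th vertex of the `i`-th class. -/
def Jgraph (r a t : ℕ) : SimpleGraph (Fin r × Fin a) where
  Adj x y :=
    if x.1 = y.1 then (x.1 : ℕ) < 2*t ∧ x.2 ≠ y.2
    else if (x.1 : ℕ)/2 = (y.1 : ℕ)/2 ∧ (x.1 : ℕ) < 2*t ∧ (y.1 : ℕ) < 2*t then x.2 = y.2
    else True
  symm := by
    constructor
    rintro ⟨i,x⟩ ⟨j,y⟩ h
    dsimp at *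
    split_ifs at h ⊢ <;> simp_all [eq_comm] <;> omega
  loopless := by constructor; rintro ⟨i,x⟩ h; simp_all

lemma Jadj' {r a t : ℕ} (u v : Fin r × Fin a) :
    (Jgraph r a t).Adj u v ↔
      ((u.1 = v.1 ∧ (u.1 : ℕ) < 2*t ∧ u.2 ≠ v.2) ∨
       (u.1 ≠ v.1 ∧ (u.1:ℕ)/2 = (v.1:ℕ)/2 ∧ (u.1:ℕ) < 2*t ∧ (v.1:ℕ) < 2*t ∧ u.2 = v.2) ∨
       (u.1 ≠ v.1 ∧ ¬((u.1:ℕ)/2 = (v.1:ℕ)/2 ∧ (u.1:ℕ) < 2*t ∧ (v.1:ℕ) < 2*t))) := by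
  show (if u.1 = v.1 then _ else _) ↔ _
  split_ifs with h1 h2 <;> simp_all

lemma Kadj {r a : ℕ} (u v : Σ _ : Fin r, Fin a) :
    (SimpleGraph.completeMultipartiteGraph fun _ : Fin r => Fin a).Adj u v ↔ u.1 ≠ v.1 := by
  simp [SimpleGraph.completeMultipartiteGraph]

lemma fin_val_ne {n : ℕ} {i j : Fin n} (h : i ≠ j) : (i : ℕ) ≠ (j : ℕ) :=
  fun h' => h (Fin.ext h')

open Finset in
lemma dom_J_iff {r a t : ℕ} (ht : t ≤ r / 2)
    {S : Finset (Fin r × Fin a)} (hS : S.Nonempty) :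
    Dominates (Jgraph r a t) ↑S ↔
      ((∃ u ∈ S, ∃ w ∈ S, u.1 ≠ w.1) ∨ (∃ j : Fin r, ∀ y : Fin a, (j, y) ∈ S)) := by
  constructor
  · intro hdom
    by_contra hq
    push_neg at hq
    obtain ⟨h1, h2⟩ := hq
    obtain ⟨u0, hu0⟩ := hS
    set j := u0.1 with hj
    by_cases hjt : (j : ℕ) < 2 * t
    · have h2t : 2 * t ≤ r := by omega
      have hjnr : (if (j : ℕ) % 2 = 0 then (j:ℕ)+1 else (j:ℕ)-1) < r := by
        split <;> omega
      set jn : Fin r := ⟨if (j : ℕ) % 2 = 0 then (j:ℕ)+1 else (j:ℕ)-1, hjnr⟩ with hjndef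
      have hprop : (jn:ℕ) ≠ (j:ℕ) ∧ (jn:ℕ)/2 = (j:ℕ)/2 ∧ (jn:ℕ) < 2*t := by
        simp only [hjndef]
        split <;> omega
      obtain ⟨y, hy⟩ := h2 j
      rcases hdom (jn, y) with hv | ⟨u, huS, hadj⟩
      · have := h1 _ hv u0 hu0
        exact hprop.1 (congrArg Fin.val this)
      · have hu1 : u.1 = j := h1 u huS u0 hu0
        rw [Jadj'] at hadj
        rcases hadj with ⟨he, _⟩ | ⟨_, _, _, _, he2⟩ | ⟨_, hnc⟩
        · exact hprop.1 (congrArg Fin.val (hu1 ▸ he)).symm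
        · refine hy ?_
          rw [← hu1, ← show u.2 = y from he2]
          exact huS
        · exact hnc ⟨by rw [hu1]; exact hprop.2.1.symm, by rw [hu1]; exact hjt, hprop.2.2⟩
    · obtain ⟨y, hy⟩ := h2 j
      rcases hdom (j, y) with hv | ⟨u, huS, hadj⟩
      · exact hy hv
      · have hu1 : u.1 = j := h1 u huS u0 hu0
        rw [Jadj'] at hadj
        rcases hadj with ⟨_, hlt, _⟩ | ⟨hne, _⟩ | ⟨hne, _⟩
        · exact hjt (hu1 ▸ hlt)
        · exact hne hu1
        · exact hne hu1
  · rintro (⟨u, hu, w, hw, huw⟩ | ⟨j, hj⟩) v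
    · by_cases hv : v ∈ S
      · exact Or.inl hv
      right
      have key : ∀ x ∈ S, x.1 ≠ v.1 → ¬((x.1:ℕ)/2 = (v.1:ℕ)/2 ∧ (x.1:ℕ) < 2*t ∧ (v.1:ℕ) < 2*t) →
          ∃ z ∈ (S:Set (Fin r × Fin a)), (Jgraph r a t).Adj z v := by
        intro x hx hne hnc
        exact ⟨x, hx, (Jadj' x v).mpr (Or.inr (Or.inr ⟨hne, hnc⟩))⟩
      by_cases hvu : v.1 = u.1
      · by_cases hlt : (v.1 : ℕ) < 2*t
        · refine ⟨u, hu, (Jadj' u v).mpr (Or.inl ⟨hvu.symm, by rw [← hvu]; exact hlt, ?_⟩)⟩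
          intro h
          exact hv (by rwa [show u = v from Prod.ext hvu.symm h] at hu)
        · have hwv : w.1 ≠ v.1 := fun h' => huw (hvu.symm.trans h'.symm)
          exact key w hw hwv (fun h => hlt h.2.2)
      by_cases hvw : v.1 = w.1
      · by_cases hlt : (v.1 : ℕ) < 2*t
        · refine ⟨w, hw, (Jadj' w v).mpr (Or.inl ⟨hvw.symm, by rw [← hvw]; exact hlt, ?_⟩)⟩
          intro h
          exact hv (by rwa [show w = v from Prod.ext hvw.symm h] at hw)
        · have huv : u.1 ≠ v.1 := fun h' => huw (h'.trans hvw)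
          exact key u hu huv (fun h => hlt h.2.2)
      have huv : u.1 ≠ v.1 := fun h => hvu h.symm
      have hwv : w.1 ≠ v.1 := fun h => hvw h.symm
      by_cases hcu : (u.1:ℕ)/2 = (v.1:ℕ)/2 ∧ (u.1:ℕ) < 2*t ∧ (v.1:ℕ) < 2*t
      · by_cases hcw : (w.1:ℕ)/2 = (v.1:ℕ)/2 ∧ (w.1:ℕ) < 2*t ∧ (v.1:ℕ) < 2*t
        · by_cases hmu : u.2 = v.2
          · exact ⟨u, hu, (Jadj' u v).mpr (Or.inr (Or.inl ⟨huv, hcu.1, hcu.2.1, hcu.2.2, hmu⟩))⟩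
          by_cases hmw : w.2 = v.2
          · exact ⟨w, hw, (Jadj' w v).mpr (Or.inr (Or.inl ⟨hwv, hcw.1, hcw.2.1, hcw.2.2, hmw⟩))⟩
          exfalso
          have h1 := fin_val_ne huv
          have h2 := fin_val_ne hwv
          have h3 := fin_val_ne huw
          obtain ⟨e1, l1, l2⟩ := hcu
          obtain ⟨e2, l3, _⟩ := hcw
          omega
        · exact key w hw hwv hcw
      · exact key u hu huv hcu
    · by_cases hv : v.1 = j
      · exact Or.inl (by rw [show v = (j, v.2) from Prod.ext hv rfl]; exact hj v.2)
      · refine Or.inr ⟨(j, v.2), hj v.2, ?_⟩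
        rw [Jadj']
        by_cases hc : (j:ℕ)/2 = (v.1:ℕ)/2 ∧ (j:ℕ) < 2*t ∧ (v.1:ℕ) < 2*t
        · exact Or.inr (Or.inl ⟨fun h => hv h.symm, hc.1, hc.2.1, hc.2.2, rfl⟩)
        · exact Or.inr (Or.inr ⟨fun h => hv h.symm, hc⟩)

open Finset in
lemma dom_K_iff {r a : ℕ}
    {S : Finset (Σ _ : Fin r, Fin a)} (hS : S.Nonempty) :
    Dominates (SimpleGraph.completeMultipartiteGraph fun _ : Fin r => Fin a) ↑S ↔
      ((∃ u ∈ S, ∃ w ∈ S, u.1 ≠ w.1) ∨ (∃ j : Fin r, ∀ y : Fin a, ⟨j, y⟩ ∈ S)) := by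
  constructor
  · intro hdom
    by_contra hq
    push_neg at hq
    obtain ⟨h1, h2⟩ := hq
    obtain ⟨u0, hu0⟩ := hS
    obtain ⟨y, hy⟩ := h2 u0.1
    rcases hdom ⟨u0.1, y⟩ with hv | ⟨u, huS, hadj⟩
    · exact hy hv
    · rw [Kadj] at hadj
      exact hadj (h1 u huS u0 hu0)
  · rintro (⟨u, hu, w, hw, huw⟩ | ⟨j, hj⟩) v
    · by_cases hv : v ∈ S
      · exact Or.inl hv
      right
      by_cases hvu : u.1 = v.1
      · exact ⟨w, hw, (Kadj w v).mpr (fun h => huw (h.symm ▸ hvu))⟩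
      · exact ⟨u, hu, (Kadj u v).mpr hvu⟩
    · by_cases hv : v.1 = j
      · exact Or.inl (by rw [show v = ⟨j, v.2⟩ from by rw [← hv]]; exact hj v.2)
      · exact Or.inr ⟨⟨j, v.2⟩, hj v.2, (Kadj _ _).mpr (fun h => hv h.symm)⟩

open Finset in
lemma numDom_eq {r a t : ℕ} (hr : 2 ≤ r) (ha : r + 2 ≤ a) (ht : t ≤ r/2) {i : ℕ} (hi : 1 ≤ i) :
    numDom (Jgraph r a t) i =
      numDom (SimpleGraph.completeMultipartiteGraph fun _ : Fin r => Fin a) i := by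
  unfold numDom
  apply Nat.card_congr
  refine Equiv.subtypeEquiv
    (Equiv.finsetCongr (Equiv.sigmaEquivProd (Fin r) (Fin a)).symm) fun S => ?_
  simp only [Equiv.finsetCongr_apply, Finset.card_map]
  refine and_congr_right fun hc => ?_
  have hne : S.Nonempty := card_pos.mp (by omega)
  have hne' : (S.map (Equiv.sigmaEquivProd (Fin r) (Fin a)).symm.toEmbedding).Nonempty :=
    Finset.map_nonempty.mpr hne
  rw [dom_J_iff ht hne, dom_K_iff hne']
  simp only [Finset.mem_map_equiv, Equiv.symm_symm]
  constructor
  · rintro (⟨u, hu, w, hw, huw⟩ | ⟨j, hj⟩)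
    · exact Or.inl ⟨⟨u.1, u.2⟩, hu, ⟨w.1, w.2⟩, hw, huw⟩
    · exact Or.inr ⟨j, fun y => hj y⟩
  · rintro (⟨u, hu, w, hw, huw⟩ | ⟨j, hj⟩)
    · exact Or.inl ⟨(u.1, u.2), hu, (w.1, w.2), hw, huw⟩
    · exact Or.inr ⟨j, fun y => hj y⟩


/-- For `r ≥ 2`, `a ≥ r+2` and `0 ≤ t ≤ ⌊r/2⌋`, `J_r(a,t)` has the same domination
polynomial as `K_r(a)`. -/
theorem domPoly_Jgraph {r a t : ℕ} (hr : 2 ≤ r) (ha : r + 2 ≤ a) (ht : t ≤ r / 2) :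
    domPoly (Jgraph r a t) =
      domPoly (SimpleGraph.completeMultipartiteGraph fun _ : Fin r => Fin a) := by
  unfold domPoly
  have hcard : Fintype.card ((_ : Fin r) × Fin a) = Fintype.card (Fin r × Fin a) := by
    simp
  rw [hcard]
  exact Finset.sum_congr rfl fun i hi => by
    rw [numDom_eq hr ha ht (Finset.mem_Icc.mp hi).1]
end

section
/- For a,b ∈ ℕ with |a − b| ≥ 2, the complete bipartite graph K(a,b) is D-unique: any graph H with D(H,x) = D(K(a,b),x) is isomorphic to K(a,b). -/
open Finset

namespace DomUnique

variable {V : Type*} [Fintype V]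

/-- complement of the closed neighborhood of `v`. -/
noncomputable def Mv (G : SimpleGraph V) (v : V) : Finset V :=
  @Finset.filter _ (fun u => u ≠ v ∧ ¬ G.Adj v u) (Classical.decPred _) Finset.univ

lemma mem_Mv {G : SimpleGraph V} {v u : V} : u ∈ Mv G v ↔ u ≠ v ∧ ¬ G.Adj v u := by
  classical
  simp [Mv]

lemma not_mem_Mv_self {G : SimpleGraph V} (v : V) : v ∉ Mv G v := by simp [mem_Mv]

lemma not_dominates_iff {G : SimpleGraph V} {S : Finset V} :
    ¬ Dominates G ↑S ↔ ∃ v, S ⊆ Mv G v := by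
  constructor
  · intro h
    rw [Dominates] at h
    push_neg at h
    obtain ⟨v, hv1, hv2⟩ := h
    refine ⟨v, fun u hu => mem_Mv.2 ⟨fun e => hv1 (by simpa [e] using hu),
      fun hadj => hv2 u (by simpa using hu) hadj.symm⟩⟩
  · rintro ⟨v, hv⟩ h
    rcases h v with h1 | ⟨u, hu, hadj⟩
    · exact (mem_Mv.1 (hv (by simpa using h1))).1 rfl
    · exact (mem_Mv.1 (hv (by simpa using hu))).2 hadj.symm

/-- the finset of non-dominating sets of size `i`. -/
noncomputable def ND (G : SimpleGraph V) (i : ℕ) : Finset (Finset V) :=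
  @Finset.filter _ (fun S => ¬ Dominates G ↑S) (Classical.decPred _) (Finset.univ.powersetCard i)

lemma mem_ND {G : SimpleGraph V} {i : ℕ} {S : Finset V} :
    S ∈ ND G i ↔ S.card = i ∧ ¬ Dominates G ↑S := by
  classical
  simp [ND, Finset.mem_powersetCard_univ]

lemma numDom_add_ND (G : SimpleGraph V) (i : ℕ) :
    numDom G i + (ND G i).card = (Fintype.card V).choose i := by
  classical
  have h1 : numDom G i
      = ((Finset.univ.powersetCard i).filter (fun S : Finset V => Dominates G ↑S)).card := by
    rw [numDom, Nat.card_eq_fintype_card, Fintype.card_subtype]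
    congr 1
    ext S
    simp [Finset.mem_powersetCard_univ]
  rw [h1]
  have h2 : (ND G i) = ((Finset.univ.powersetCard i).filter (fun S : Finset V => ¬ Dominates G ↑S)) := by
    rw [ND]; congr
  rw [h2, Finset.card_filter_add_card_filter_not, Finset.card_powersetCard,
    Finset.card_univ]

lemma dominates_univ (G : SimpleGraph V) : Dominates G ↑(Finset.univ : Finset V) :=
  fun v => Or.inl (by simp)

lemma numDom_card_univ (G : SimpleGraph V) : numDom G (Fintype.card V) = 1 := by
  classical
  have h1 : numDom G (Fintype.card V)
      = ((Finset.univ.powersetCard (Fintype.card V)).filter (fun S : Finset V => Dominates G ↑S)).card := by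
    rw [numDom, Nat.card_eq_fintype_card, Fintype.card_subtype]
    congr 1
    ext S
    simp [Finset.mem_powersetCard_univ]
  rw [h1]
  have : (Finset.univ : Finset V).powersetCard (Fintype.card V) = {Finset.univ} := by
    rw [← Finset.card_univ, Finset.powersetCard_self]
  rw [this]
  rw [Finset.filter_singleton, if_pos (dominates_univ G)]
  simp

lemma numDom_of_card_lt (G : SimpleGraph V) {i : ℕ} (h : Fintype.card V < i) :
    numDom G i = 0 := by
  have := numDom_add_ND G i
  rw [Nat.choose_eq_zero_of_lt h] at this
  omega

lemma coeff_domPoly (G : SimpleGraph V) (j : ℕ) :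
    (domPoly G).coeff j
      = if j ∈ Finset.Icc 1 (Fintype.card V) then (numDom G j : ℤ) else 0 := by
  rw [domPoly, Polynomial.finset_sum_coeff]
  have step : ∀ i ∈ Finset.Icc 1 (Fintype.card V),
      ((numDom G i : Polynomial ℤ) * Polynomial.X ^ i).coeff j
        = if i = j then ((numDom G i : ℤ)) else 0 :=
    fun i _ => by simp [Polynomial.coeff_X_pow, eq_comm]
  rw [Finset.sum_congr rfl step]
  exact Finset.sum_ite_eq' (Finset.Icc 1 (Fintype.card V)) j (fun i => (numDom G i : ℤ))

lemma card_eq_of_domPoly_eq {V₂ : Type*} [Fintype V₂] {G₁ : SimpleGraph V}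
    {G₂ : SimpleGraph V₂} (h : domPoly G₁ = domPoly G₂) (h2 : 1 ≤ Fintype.card V₂) :
    Fintype.card V = Fintype.card V₂ := by
  set n₁ := Fintype.card V with hn₁
  set n₂ := Fintype.card V₂ with hn₂
  have e2 : (domPoly G₁).coeff n₂ = (domPoly G₂).coeff n₂ := by rw [h]
  rw [coeff_domPoly, coeff_domPoly, if_pos (by simp [hn₂, h2]; exact h2 : n₂ ∈ Finset.Icc 1 n₂),
    numDom_card_univ] at e2
  have hle : n₂ ≤ n₁ := by
    by_contra hc
    rw [if_neg (by simp; omega)] at e2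
    exact absurd e2 (by norm_num)
  have h1 : 1 ≤ n₁ := le_trans h2 hle
  have e1 : (domPoly G₁).coeff n₁ = (domPoly G₂).coeff n₁ := by rw [h]
  rw [coeff_domPoly, coeff_domPoly, if_pos (by simp [hn₁, h1]; exact h1 : n₁ ∈ Finset.Icc 1 n₁),
    numDom_card_univ] at e1
  have hge : n₁ ≤ n₂ := by
    by_contra hc
    rw [if_neg (by simp; omega)] at e1
    exact absurd e1.symm (by norm_num)
  omega

lemma ND_card_eq_of_domPoly_eq {V₂ : Type*} [Fintype V₂] {G₁ : SimpleGraph V}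
    {G₂ : SimpleGraph V₂} (h : domPoly G₁ = domPoly G₂) (h2 : 1 ≤ Fintype.card V₂)
    (i : ℕ) (hi : 1 ≤ i) : (ND G₁ i).card = (ND G₂ i).card := by
  have hcard := card_eq_of_domPoly_eq h h2
  have hnum : numDom G₁ i = numDom G₂ i := by
    rcases le_or_gt i (Fintype.card V₂) with hle | hlt
    · have e : (domPoly G₁).coeff i = (domPoly G₂).coeff i := by rw [h]
      rw [coeff_domPoly, coeff_domPoly, if_pos (by simp [hcard]; omega),
        if_pos (by simp; omega)] at e
      exact_mod_cast e
    · rw [numDom_of_card_lt _ (by omega), numDom_of_card_lt _ hlt]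
  have a1 := numDom_add_ND G₁ i
  have a2 := numDom_add_ND G₂ i
  rw [hcard] at a1
  omega

variable {a b : ℕ}

def Aside (a b : ℕ) : Finset (Fin a ⊕ Fin b) :=
  Finset.univ.map ⟨Sum.inl, Sum.inl_injective⟩

def Bside (a b : ℕ) : Finset (Fin a ⊕ Fin b) :=
  Finset.univ.map ⟨Sum.inr, Sum.inr_injective⟩

lemma mem_Aside {x : Fin a ⊕ Fin b} : x ∈ Aside a b ↔ x.isLeft := by
  cases x <;> simp [Aside]

lemma mem_Bside {x : Fin a ⊕ Fin b} : x ∈ Bside a b ↔ x.isRight := by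
  cases x <;> simp [Bside]

lemma card_Aside : (Aside a b).card = a := by simp [Aside]
lemma card_Bside : (Bside a b).card = b := by simp [Bside]

lemma not_dominates_K (ha : 0 < a) (hb : 0 < b) {S : Finset (Fin a ⊕ Fin b)} :
    ¬ Dominates (completeBipartiteGraph (Fin a) (Fin b)) ↑S ↔
      (S ⊆ Aside a b ∧ S ≠ Aside a b) ∨ (S ⊆ Bside a b ∧ S ≠ Bside a b) := by
  constructor
  · intro h
    by_cases hA : S ⊆ Aside a b
    · refine Or.inl ⟨hA, ?_⟩
      rintro rfl
      exact h (fun v => by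
        cases v with
        | inl w => exact Or.inl (by simpa using mem_Aside.2 (by simp))
        | inr w => exact Or.inr ⟨Sum.inl ⟨0, ha⟩, by simpa using mem_Aside.2 (by simp), by simp⟩)
    · by_cases hB : S ⊆ Bside a b
      · refine Or.inr ⟨hB, ?_⟩
        rintro rfl
        exact h (fun v => by
          cases v with
          | inr w => exact Or.inl (by simpa using mem_Bside.2 (by simp))
          | inl w => exact Or.inr ⟨Sum.inr ⟨0, hb⟩, by simpa using mem_Bside.2 (by simp), by simp⟩)
      · exfalso
        obtain ⟨x, hxS, hxA⟩ := Finset.not_subset.1 hA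
        obtain ⟨y, hyS, hyB⟩ := Finset.not_subset.1 hB
        obtain ⟨x0, rfl⟩ : ∃ x0, x = Sum.inr x0 := by
          cases x with
          | inl w => exact absurd (mem_Aside.2 (by simp)) hxA
          | inr w => exact ⟨w, rfl⟩
        obtain ⟨y0, rfl⟩ : ∃ y0, y = Sum.inl y0 := by
          cases y with
          | inr w => exact absurd (mem_Bside.2 (by simp)) hyB
          | inl w => exact ⟨w, rfl⟩
        exact h (fun v => by
          cases v with
          | inl w => exact Or.inr ⟨Sum.inr x0, by simpa using hxS, by simp⟩
          | inr w => exact Or.inr ⟨Sum.inl y0, by simpa using hyS, by simp⟩)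
  · rintro (⟨hsub, hne⟩ | ⟨hsub, hne⟩) h
    · obtain ⟨x, hxA, hxS⟩ := Finset.exists_of_ssubset (hsub.ssubset_of_ne hne)
      obtain ⟨x0, rfl⟩ : ∃ x0, x = Sum.inl x0 := by
        cases x with
        | inl w => exact ⟨w, rfl⟩
        | inr w => simp [mem_Aside] at hxA
      rcases h (Sum.inl x0) with h1 | ⟨u, hu, hadj⟩
      · exact hxS (by simpa using h1)
      · have := hsub (by simpa using hu)
        rw [mem_Aside] at this
        cases u with
        | inl w => simp at hadj
        | inr w => simp at this
    · obtain ⟨x, hxA, hxS⟩ := Finset.exists_of_ssubset (hsub.ssubset_of_ne hne)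
      obtain ⟨x0, rfl⟩ : ∃ x0, x = Sum.inr x0 := by
        cases x with
        | inr w => exact ⟨w, rfl⟩
        | inl w => simp [mem_Bside] at hxA
      rcases h (Sum.inr x0) with h1 | ⟨u, hu, hadj⟩
      · exact hxS (by simpa using h1)
      · have := hsub (by simpa using hu)
        rw [mem_Bside] at this
        cases u with
        | inr w => simp at hadj
        | inl w => simp at this


lemma ND_K_card (ha : 0 < a) (hb : 0 < b) {i : ℕ} (hi : 1 ≤ i) :
    (ND (completeBipartiteGraph (Fin a) (Fin b)) i).card
      = (a.choose i - if i = a then 1 else 0) + (b.choose i - if i = b then 1 else 0) := by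
  classical
  have hset : ND (completeBipartiteGraph (Fin a) (Fin b)) i
      = ((Aside a b).powersetCard i).erase (Aside a b)
        ∪ ((Bside a b).powersetCard i).erase (Bside a b) := by
    ext S
    rw [mem_ND, not_dominates_K ha hb]
    simp only [Finset.mem_union, Finset.mem_erase, Finset.mem_powersetCard]
    tauto
  rw [hset]
  have hdisj : Disjoint (((Aside a b).powersetCard i).erase (Aside a b))
      (((Bside a b).powersetCard i).erase (Bside a b)) := by
    rw [Finset.disjoint_left]
    intro S hS1 hS2
    rw [Finset.mem_erase, Finset.mem_powersetCard] at hS1 hS2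
    have : S = ∅ := by
      rw [Finset.eq_empty_iff_forall_notMem]
      intro x hx
      have h1 := hS1.2.1 hx
      have h2 := hS2.2.1 hx
      rw [mem_Aside] at h1; rw [mem_Bside] at h2
      cases x <;> simp_all
    rw [this] at hS1
    simp at hS1
    omega
  rw [Finset.card_union_of_disjoint hdisj]
  congr 1
  · rcases eq_or_ne i a with rfl | hne
    · rw [Finset.card_erase_of_mem (by
        rw [Finset.mem_powersetCard]; exact ⟨Finset.Subset.refl _, card_Aside⟩)]
      simp [Finset.card_powersetCard, card_Aside]
    · rw [Finset.erase_eq_of_notMem (by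
        rw [Finset.mem_powersetCard]
        rintro ⟨-, h⟩
        rw [card_Aside] at h
        exact hne h.symm)]
      simp [Finset.card_powersetCard, card_Aside, hne]
  · rcases eq_or_ne i b with rfl | hne
    · rw [Finset.card_erase_of_mem (by
        rw [Finset.mem_powersetCard]; exact ⟨Finset.Subset.refl _, card_Bside⟩)]
      simp [Finset.card_powersetCard, card_Bside]
    · rw [Finset.erase_eq_of_notMem (by
        rw [Finset.mem_powersetCard]
        rintro ⟨-, h⟩
        rw [card_Bside] at h
        exact hne h.symm)]
      simp [Finset.card_powersetCard, card_Bside, hne]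

lemma two_mul_choose_two (k : ℕ) : 2 * (k + 1).choose 2 = (k + 1) * k := by
  rw [Nat.choose_two_right]
  simp only [Nat.add_sub_cancel]
  have hdvd : (2:ℕ) ∣ (k + 1) * k := by
    have : Even ((k + 1) * k) := by rw [mul_comm]; exact Nat.even_mul_succ_self k
    exact this.two_dvd
  exact Nat.mul_div_cancel' hdvd

lemma shadow_structure {α : Type*} [DecidableEq α] {k : ℕ} (hk : 2 ≤ k)
    {𝒯 : Finset (Finset α)} (hT : 𝒯.card = k + 1) (hmem : ∀ T ∈ 𝒯, T.card = k)
    (hsh : (𝒯.biUnion fun T => T.powersetCard (k - 1)).card ≤ (k + 1).choose 2) :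
    ∃ Z : Finset α, Z.card = k + 1 ∧ ∀ T ∈ 𝒯, T ⊆ Z := by
  classical
  set Sh : Finset (Finset α) := 𝒯.biUnion (fun T => T.powersetCard (k - 1)) with hSh
  have mem_shadow : ∀ {S : Finset α}, S ∈ Sh ↔ ∃ T ∈ 𝒯, S ⊆ T ∧ S.card = k - 1 := by
    intro S
    simp only [hSh, Finset.mem_biUnion, Finset.mem_powersetCard]
  have hinter : ∀ T ∈ 𝒯, ∀ T' ∈ 𝒯, T ≠ T' → (T ∩ T').card ≤ k - 1 := by
    intro T hT1 T' hT2 hne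
    by_contra hc
    push_neg at hc
    have h1 : T ∩ T' = T :=
      Finset.eq_of_subset_of_card_le inter_subset_left (by rw [hmem T hT1]; omega)
    have h2 : T ⊆ T' := Finset.inter_eq_left.mp h1
    exact hne (Finset.eq_of_subset_of_card_le h2 (by rw [hmem T hT1, hmem T' hT2]))
  by_cases hall : ∀ p ∈ 𝒯.offDiag, ((p.1 : Finset α) ∩ p.2).card = k - 1
  · -- all pairwise intersections have size k-1
    obtain ⟨T₁, hT₁, T₂, hT₂, hT12⟩ := Finset.one_lt_card.1 (by omega : 1 < 𝒯.card)
    set I : Finset α := T₁ ∩ T₂ with hIdef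
    have hI : I.card = k - 1 := hall (T₁, T₂) (Finset.mem_offDiag.2 ⟨hT₁, hT₂, hT12⟩)
    by_cases hstar : ∀ T ∈ 𝒯, I ⊆ T
    · -- sunflower case: the shadow is too big, contradiction
      exfalso
      have hdiff : ∀ T ∈ 𝒯, (T \ I).card = 1 := by
        intro T hTm
        rw [Finset.card_sdiff_of_subset (hstar T hTm), hmem T hTm, hI]
        omega
      set F : Finset (Finset α) :=
        insert I ((I ×ˢ 𝒯).image (fun p => p.2.erase p.1)) with hF
      have hFsub : F ⊆ Sh := by
        intro S hS
        rw [hF, Finset.mem_insert] at hS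
        rcases hS with rfl | hS
        · exact mem_shadow.2 ⟨T₁, hT₁, inter_subset_left, hI⟩
        · obtain ⟨⟨w, T⟩, hp, rfl⟩ := Finset.mem_image.1 hS
          rw [Finset.mem_product] at hp
          refine mem_shadow.2 ⟨T, hp.2, Finset.erase_subset _ _, ?_⟩
          rw [Finset.card_erase_of_mem (hstar T hp.2 hp.1), hmem T hp.2]
      have hInotmem : I ∉ (I ×ˢ 𝒯).image (fun p => p.2.erase p.1) := by
        rw [Finset.mem_image]
        rintro ⟨⟨w, T⟩, hp, heq⟩
        rw [Finset.mem_product] at hp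
        -- T.erase w contains an element outside I, but I doesn't
        obtain ⟨y, hy⟩ := Finset.card_eq_one.1 (hdiff T hp.2)
        have hyT : y ∈ T \ I := by rw [hy]; exact Finset.mem_singleton_self y
        rw [Finset.mem_sdiff] at hyT
        have hyw : y ≠ w := fun h => hyT.2 (h ▸ hp.1)
        have : y ∈ T.erase w := Finset.mem_erase.2 ⟨hyw, hyT.1⟩
        rw [heq] at this
        exact hyT.2 this
      have hinj : Set.InjOn (fun p : α × Finset α => p.2.erase p.1) ↑(I ×ˢ 𝒯) := by
        rintro ⟨w, T⟩ hp ⟨w', T'⟩ hp' heq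
        simp only [Finset.coe_product, Set.mem_prod, Finset.mem_coe] at hp hp'
        simp only at heq
        -- first, T = T'
        obtain ⟨y, hy⟩ := Finset.card_eq_one.1 (hdiff T hp.2)
        obtain ⟨y', hy'⟩ := Finset.card_eq_one.1 (hdiff T' hp'.2)
        have hyT : y ∈ T \ I := hy ▸ Finset.mem_singleton_self y
        have hy'T : y' ∈ T' \ I := hy' ▸ Finset.mem_singleton_self y'
        rw [Finset.mem_sdiff] at hyT hy'T
        have hyy' : y = y' := by
          have h1 : y ∈ T.erase w := Finset.mem_erase.2 ⟨fun h => hyT.2 (h ▸ hp.1), hyT.1⟩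
          rw [heq] at h1
          have h2 : y ∈ T' := Finset.mem_of_mem_erase h1
          -- y ∈ T', y ∉ I so y ∈ T' \ I = {y'}
          have : y ∈ T' \ I := Finset.mem_sdiff.2 ⟨h2, hyT.2⟩
          rw [hy'] at this
          exact Finset.mem_singleton.1 this
        have hTT' : T = T' := by
          have e1 : T = I ∪ {y} := by
            apply Finset.eq_of_subset_of_card_le
            · intro x hx
              by_cases hxI : x ∈ I
              · exact Finset.mem_union_left _ hxI
              · have : x ∈ T \ I := Finset.mem_sdiff.2 ⟨hx, hxI⟩
                rw [hy] at this
                exact Finset.mem_union_right _ this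
            · have : ({y} : Finset α).card = 1 := Finset.card_singleton y
              have hc : (I ∪ {y}).card ≤ I.card + 1 := by
                calc (I ∪ {y}).card ≤ I.card + ({y} : Finset α).card := Finset.card_union_le _ _
                _ = I.card + 1 := by rw [this]
              rw [hmem T hp.2, hI] at *
              omega
          have e2 : T' = I ∪ {y'} := by
            apply Finset.eq_of_subset_of_card_le
            · intro x hx
              by_cases hxI : x ∈ I
              · exact Finset.mem_union_left _ hxI
              · have : x ∈ T' \ I := Finset.mem_sdiff.2 ⟨hx, hxI⟩
                rw [hy'] at this
                exact Finset.mem_union_right _ this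
            · have hc : (I ∪ {y'}).card ≤ I.card + 1 := by
                calc (I ∪ {y'}).card ≤ I.card + ({y'} : Finset α).card := Finset.card_union_le _ _
                _ = I.card + 1 := by rw [Finset.card_singleton]
              rw [hmem T' hp'.2, hI] at *
              omega
          rw [e1, e2, hyy']
        -- now w = w'
        subst hTT'
        have hww' : w = w' := by
          by_contra hne
          have : w' ∈ T.erase w := Finset.mem_erase.2 ⟨fun h => hne h.symm, hstar T hp.2 hp'.1⟩
          rw [heq] at this
          exact (Finset.mem_erase.1 this).1 rfl
        rw [hww']
      have hcardF : F.card = (k - 1) * (k + 1) + 1 := by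
        rw [hF, Finset.card_insert_of_notMem hInotmem, Finset.card_image_of_injOn hinj,
          Finset.card_product, hI, hT]
      have hle := (Finset.card_le_card hFsub).trans hsh
      rw [hcardF] at hle
      have h2 := two_mul_choose_two k
      obtain ⟨m, rfl⟩ : ∃ m, k = m + 2 := ⟨k - 2, by omega⟩
      have e1 : (m + 2 - 1) = m + 1 := rfl
      rw [e1] at hle
      nlinarith [hle, h2]
    · -- not a sunflower: get the containing (k+1)-set
      push_neg at hstar
      obtain ⟨T₃, hT₃, hnsub₃⟩ := hstar
      -- p and q : the extra elements of T₁ and T₂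
      have hd1 : (T₁ \ I).card = 1 := by
        rw [Finset.card_sdiff_of_subset inter_subset_left, hmem T₁ hT₁, hI]; omega
      have hd2 : (T₂ \ I).card = 1 := by
        rw [Finset.card_sdiff_of_subset inter_subset_right, hmem T₂ hT₂, hI]; omega
      obtain ⟨p, hp⟩ := Finset.card_eq_one.1 hd1
      obtain ⟨q, hq⟩ := Finset.card_eq_one.1 hd2
      have hpT₁ : p ∈ T₁ ∧ p ∉ I := by
        have := hp ▸ Finset.mem_singleton_self p
        exact Finset.mem_sdiff.1 this
      have hqT₂ : q ∈ T₂ ∧ q ∉ I := by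
        have := hq ▸ Finset.mem_singleton_self q
        exact Finset.mem_sdiff.1 this
      have hpq : p ≠ q := by
        rintro rfl
        exact hpT₁.2 (Finset.mem_inter.2 ⟨hpT₁.1, hqT₂.1⟩)
      have hT₁eq : T₁ = I ∪ {p} := by
        apply Finset.eq_of_subset_of_card_le
        · intro x hx
          by_cases hxI : x ∈ I
          · exact Finset.mem_union_left _ hxI
          · have : x ∈ T₁ \ I := Finset.mem_sdiff.2 ⟨hx, hxI⟩
            rw [hp] at this
            exact Finset.mem_union_right _ this
        · have hc : (I ∪ {p}).card ≤ I.card + 1 := by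
            calc (I ∪ {p}).card ≤ I.card + ({p} : Finset α).card := Finset.card_union_le _ _
            _ = I.card + 1 := by rw [Finset.card_singleton]
          rw [hmem T₁ hT₁, hI] at *
          omega
      have hT₂eq : T₂ = I ∪ {q} := by
        apply Finset.eq_of_subset_of_card_le
        · intro x hx
          by_cases hxI : x ∈ I
          · exact Finset.mem_union_left _ hxI
          · have : x ∈ T₂ \ I := Finset.mem_sdiff.2 ⟨hx, hxI⟩
            rw [hq] at this
            exact Finset.mem_union_right _ this
        · have hc : (I ∪ {q}).card ≤ I.card + 1 := by
            calc (I ∪ {q}).card ≤ I.card + ({q} : Finset α).card := Finset.card_union_le _ _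
            _ = I.card + 1 := by rw [Finset.card_singleton]
          rw [hmem T₂ hT₂, hI] at *
          omega
      set Z : Finset α := I ∪ {p, q} with hZ
      have hdisjZ : Disjoint I ({p, q} : Finset α) := by
        rw [Finset.disjoint_right]
        intro x hx
        rw [Finset.mem_insert, Finset.mem_singleton] at hx
        rcases hx with rfl | rfl
        · exact hpT₁.2
        · exact hqT₂.2
      have hcardZ : Z.card = k + 1 := by
        rw [hZ, Finset.card_union_of_disjoint hdisjZ, hI, Finset.card_pair hpq]
        omega
      -- structure of sets not containing I
      have struct : ∀ T' ∈ 𝒯, ¬ I ⊆ T' → ∃ y ∈ I, y ∉ T' ∧ T' = (I.erase y) ∪ {p, q} := by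
        intro T' hT'm hnsub
        obtain ⟨y, hyI, hyT'⟩ := Finset.not_subset.1 hnsub
        refine ⟨y, hyI, hyT', ?_⟩
        have hne₁ : T' ≠ T₁ := fun h => hyT' (h ▸ (Finset.mem_inter.1 hyI).1)
        have hne₂ : T' ≠ T₂ := fun h => hyT' (h ▸ (Finset.mem_inter.1 hyI).2)
        -- T₁ \ T' = {y}
        have hstep : ∀ x ∈ T₁, x ≠ y → x ∈ T' := by
          intro x hx hxy
          by_contra hxT'
          -- both x and y are in T₁ \ T', but |T₁ \ T'| = 1
          have hc1 : (T₁ \ T').card = 1 := by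
            have hi := hall (T₁, T') (Finset.mem_offDiag.2 ⟨hT₁, hT'm, fun h => hne₁ h.symm⟩)
            simp only at hi
            have h2 := Finset.card_sdiff_add_card_inter T₁ T'
            rw [hi, hmem T₁ hT₁] at h2
            omega
          obtain ⟨m, hm⟩ := Finset.card_eq_one.1 hc1
          have hxm : x ∈ T₁ \ T' := Finset.mem_sdiff.2 ⟨hx, hxT'⟩
          have hym : y ∈ T₁ \ T' := Finset.mem_sdiff.2 ⟨(Finset.mem_inter.1 hyI).1, hyT'⟩
          rw [hm, Finset.mem_singleton] at hxm hym
          exact hxy (hxm.trans hym.symm)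
        have hstep₂ : ∀ x ∈ T₂, x ≠ y → x ∈ T' := by
          intro x hx hxy
          by_contra hxT'
          have hc1 : (T₂ \ T').card = 1 := by
            have := hall (T₂, T') (Finset.mem_offDiag.2 ⟨hT₂, hT'm, fun h => hne₂ h.symm⟩)
            simp only at this
            have h2 := Finset.card_sdiff_add_card_inter T₂ T'
            rw [this, hmem T₂ hT₂] at h2
            omega
          obtain ⟨m, hm⟩ := Finset.card_eq_one.1 hc1
          have hxm : x ∈ T₂ \ T' := Finset.mem_sdiff.2 ⟨hx, hxT'⟩
          have hym : y ∈ T₂ \ T' := Finset.mem_sdiff.2 ⟨(Finset.mem_inter.1 hyI).2, hyT'⟩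
          rw [hm, Finset.mem_singleton] at hxm hym
          exact hxy (hxm.trans hym.symm)
        have hsub : (I.erase y) ∪ {p, q} ⊆ T' := by
          intro x hx
          rw [Finset.mem_union, Finset.mem_erase, Finset.mem_insert, Finset.mem_singleton] at hx
          rcases hx with ⟨hxy, hxI⟩ | rfl | rfl
          · exact hstep x (Finset.mem_inter.1 hxI).1 hxy
          · exact hstep x hpT₁.1 (fun h => hpT₁.2 (h ▸ hyI))
          · exact hstep₂ x hqT₂.1 (fun h => hqT₂.2 (h ▸ hyI))
        have hcards : T'.card ≤ ((I.erase y) ∪ {p, q}).card := by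
          have hdisj : Disjoint (I.erase y) ({p, q} : Finset α) :=
            Finset.disjoint_of_subset_left (Finset.erase_subset _ _) hdisjZ
          rw [Finset.card_union_of_disjoint hdisj, Finset.card_erase_of_mem hyI, hI,
            Finset.card_pair hpq, hmem T' hT'm]
          omega
        exact (Finset.eq_of_subset_of_card_le hsub hcards).symm
      obtain ⟨y, hyI, hyT₃, hT₃eq⟩ := struct T₃ hT₃ hnsub₃
      refine ⟨Z, hcardZ, ?_⟩
      intro T hTm
      by_cases hTI : I ⊆ T
      · rcases eq_or_ne T T₁ with rfl | hne₁
        · rw [hT₁eq, hZ]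
          exact Finset.union_subset_union (Finset.Subset.refl I) (by intro x hx; rw [Finset.mem_singleton] at hx; simp [hx])
        rcases eq_or_ne T T₂ with rfl | hne₂
        · rw [hT₂eq, hZ]
          exact Finset.union_subset_union (Finset.Subset.refl I) (by intro x hx; rw [Finset.mem_singleton] at hx; simp [hx])
        -- T = I ∪ {r}
        have hdT : (T \ I).card = 1 := by
          rw [Finset.card_sdiff_of_subset hTI, hmem T hTm, hI]; omega
        obtain ⟨r, hr⟩ := Finset.card_eq_one.1 hdT
        have hrT : r ∈ T ∧ r ∉ I := Finset.mem_sdiff.1 (hr ▸ Finset.mem_singleton_self r)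
        have hTeq : T = I ∪ {r} := by
          apply Finset.eq_of_subset_of_card_le
          · intro x hx
            by_cases hxI : x ∈ I
            · exact Finset.mem_union_left _ hxI
            · have : x ∈ T \ I := Finset.mem_sdiff.2 ⟨hx, hxI⟩
              rw [hr] at this
              exact Finset.mem_union_right _ this
          · have hc : (I ∪ {r}).card ≤ I.card + 1 := by
              calc (I ∪ {r}).card ≤ I.card + ({r} : Finset α).card := Finset.card_union_le _ _
              _ = I.card + 1 := by rw [Finset.card_singleton]
            rw [hmem T hTm, hI] at *
            omega
        -- show r ∈ {p, q}
        have hrpq : r ∈ ({p, q} : Finset α) := by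
          by_contra hrn
          -- then T ∩ T₃ ⊆ I.erase y, too small
          have hTne₃ : T ≠ T₃ := fun h => hnsub₃ (h ▸ hTI)
          have hcint := hall (T, T₃) (Finset.mem_offDiag.2 ⟨hTm, hT₃, hTne₃⟩)
          simp only at hcint
          have hsubsmall : T ∩ T₃ ⊆ I.erase y := by
            intro x hx
            rw [Finset.mem_inter] at hx
            have hx₃ := hx.2
            rw [hT₃eq, Finset.mem_union] at hx₃
            rcases hx₃ with h | h
            · exact h
            · exfalso
              have hxT := hx.1
              rw [hTeq, Finset.mem_union, Finset.mem_singleton] at hxT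
              rcases hxT with hxI | rfl
              · rw [Finset.mem_insert, Finset.mem_singleton] at h
                rcases h with rfl | rfl
                · exact hpT₁.2 hxI
                · exact hqT₂.2 hxI
              · exact hrn h
          have : (T ∩ T₃).card ≤ k - 2 := by
            calc (T ∩ T₃).card ≤ (I.erase y).card := Finset.card_le_card hsubsmall
            _ = k - 2 := by rw [Finset.card_erase_of_mem hyI, hI]; omega
          omega
        rw [hTeq, hZ]
        exact Finset.union_subset_union (Finset.Subset.refl I)
          (by intro x hx; rw [Finset.mem_singleton] at hx; exact hx ▸ hrpq)
      · obtain ⟨y', hy'I, hy'T, hTeq⟩ := struct T hTm hTI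
        rw [hTeq, hZ]
        exact Finset.union_subset_union (Finset.erase_subset _ _) (Finset.Subset.refl _)
  · -- some pair has small intersection: counting contradiction
    exfalso
    push_neg at hall
    obtain ⟨p₀, hp₀, hp₀small⟩ := hall
    -- double counting
    have count1 : ∑ S ∈ Sh, (𝒯.filter (fun T => S ⊆ T)).card = (k + 1) * k := by
      have := Finset.sum_card_bipartiteAbove_eq_sum_card_bipartiteBelow
        (s := Sh) (t := 𝒯) (r := fun (S : Finset α) (T : Finset α) => S ⊆ T)
      simp only [Finset.bipartiteAbove, Finset.bipartiteBelow] at this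
      rw [this]
      have hterm : ∀ T ∈ 𝒯, (Sh.filter (fun S => S ⊆ T)).card = k := by
        intro T hTm
        have : Sh.filter (fun S => S ⊆ T) = T.powersetCard (k - 1) := by
          ext S
          rw [Finset.mem_filter, Finset.mem_powersetCard, mem_shadow]
          constructor
          · rintro ⟨⟨T', _, _, hc⟩, hsub⟩
            exact ⟨hsub, hc⟩
          · rintro ⟨hsub, hc⟩
            exact ⟨⟨T, hTm, hsub, hc⟩, hsub⟩
        rw [this, Finset.card_powersetCard, hmem T hTm]
        rw [Nat.choose_symm (by omega)]
        exact Nat.choose_one_right k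
      rw [Finset.sum_congr rfl hterm, Finset.sum_const, hT, smul_eq_mul]
    have count2 : ∑ S ∈ Sh, (𝒯.filter (fun T => S ⊆ T)).card *
        ((𝒯.filter (fun T => S ⊆ T)).card - 1) ≤ (k + 1) * k - 1 := by
      have hdc := Finset.sum_card_bipartiteAbove_eq_sum_card_bipartiteBelow
        (s := Sh) (t := 𝒯.offDiag) (r := fun (S : Finset α) (p : Finset α × Finset α) => S ⊆ p.1 ∧ S ⊆ p.2)
      simp only [Finset.bipartiteAbove, Finset.bipartiteBelow] at hdc
      have lhs_eq : ∀ S ∈ Sh, ((𝒯.offDiag).filter (fun p => S ⊆ p.1 ∧ S ⊆ p.2)).card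
          = (𝒯.filter (fun T => S ⊆ T)).card * ((𝒯.filter (fun T => S ⊆ T)).card - 1) := by
        intro S _
        have heq : (𝒯.offDiag).filter (fun p => S ⊆ p.1 ∧ S ⊆ p.2)
            = (𝒯.filter (fun T => S ⊆ T)).offDiag := by
          ext ⟨X, Y⟩
          simp only [Finset.mem_filter, Finset.mem_offDiag]
          tauto
        rw [heq, Finset.offDiag_card]
        set t := (𝒯.filter (fun T => S ⊆ T)).card
        cases t with
        | zero => simp
        | succ m =>
          have h1 : m + 1 - 1 = m := rfl
          rw [h1]
          have h2 : (m + 1) * (m + 1) = (m + 1) * m + (m + 1) := by ring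
          omega
      have rhs_le : ∑ p ∈ 𝒯.offDiag, ((Sh).filter (fun S => S ⊆ p.1 ∧ S ⊆ p.2)).card
          ≤ (k + 1) * k - 1 := by
        have hterm : ∀ p ∈ 𝒯.offDiag, ((Sh).filter (fun S => S ⊆ p.1 ∧ S ⊆ p.2)).card
            = (p.1 ∩ p.2).card.choose (k - 1) := by
          rintro ⟨X, Y⟩ hpm
          rw [Finset.mem_offDiag] at hpm
          have heq : (Sh).filter (fun S => S ⊆ X ∧ S ⊆ Y) = (X ∩ Y).powersetCard (k - 1) := by
            ext S
            rw [Finset.mem_filter, Finset.mem_powersetCard, mem_shadow]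
            constructor
            · rintro ⟨⟨T', _, _, hc⟩, h1, h2⟩
              exact ⟨Finset.subset_inter h1 h2, hc⟩
            · rintro ⟨hsub, hc⟩
              exact ⟨⟨X, hpm.1, hsub.trans inter_subset_left, hc⟩,
                hsub.trans inter_subset_left, hsub.trans inter_subset_right⟩
          rw [heq, Finset.card_powersetCard]
        rw [Finset.sum_congr rfl hterm]
        have hbound : ∀ p ∈ 𝒯.offDiag, ((p.1 : Finset α) ∩ p.2).card.choose (k - 1) ≤ 1 := by
          rintro ⟨X, Y⟩ hpm
          rw [Finset.mem_offDiag] at hpm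
          have := hinter X hpm.1 Y hpm.2.1 hpm.2.2
          rcases lt_or_eq_of_le this with h | h
          · rw [Nat.choose_eq_zero_of_lt h]; omega
          · rw [h, Nat.choose_self]
        have hzero : ((p₀.1 : Finset α) ∩ p₀.2).card.choose (k - 1) = 0 := by
          apply Nat.choose_eq_zero_of_lt
          have hp₀' := Finset.mem_offDiag.1 hp₀
          have h1 := hinter p₀.1 hp₀'.1 p₀.2 hp₀'.2.1 hp₀'.2.2
          omega
        calc ∑ p ∈ 𝒯.offDiag, ((p.1 : Finset α) ∩ p.2).card.choose (k - 1)
            = ∑ p ∈ 𝒯.offDiag.erase p₀, ((p.1 : Finset α) ∩ p.2).card.choose (k - 1) := by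
              rw [← Finset.sum_erase_add _ _ hp₀, hzero, add_zero]
          _ ≤ ∑ p ∈ 𝒯.offDiag.erase p₀, 1 := by
              apply Finset.sum_le_sum
              intro p hp
              exact hbound p (Finset.mem_of_mem_erase hp)
          _ = (𝒯.offDiag.erase p₀).card := by rw [Finset.sum_const, smul_eq_mul, mul_one]
          _ = 𝒯.offDiag.card - 1 := by rw [Finset.card_erase_of_mem hp₀]
          _ ≤ (k + 1) * k - 1 := by
              rw [Finset.offDiag_card, hT]
              have : (k + 1) * (k + 1) = (k + 1) * k + (k + 1) := by ring
              omega
      calc ∑ S ∈ Sh, (𝒯.filter (fun T => S ⊆ T)).card *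
            ((𝒯.filter (fun T => S ⊆ T)).card - 1)
          = ∑ S ∈ Sh, ((𝒯.offDiag).filter (fun p => S ⊆ p.1 ∧ S ⊆ p.2)).card := by
            exact (Finset.sum_congr rfl lhs_eq).symm
        _ = ∑ p ∈ 𝒯.offDiag, ((Sh).filter (fun S => S ⊆ p.1 ∧ S ⊆ p.2)).card := hdc
        _ ≤ (k + 1) * k - 1 := rhs_le
    -- pointwise: 2t ≤ 2 + t(t-1)
    have pointwise : ∀ S ∈ Sh, 2 * (𝒯.filter (fun T => S ⊆ T)).card
        ≤ 2 + (𝒯.filter (fun T => S ⊆ T)).card * ((𝒯.filter (fun T => S ⊆ T)).card - 1) := by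
      intro S hS
      set t := (𝒯.filter (fun T => S ⊆ T)).card
      cases t with
      | zero => omega
      | succ m =>
        simp only [Nat.succ_sub_one]
        nlinarith [Nat.le_mul_of_pos_left m (show 0 < m + 1 by omega)]
    have hsum : 2 * ((k + 1) * k) ≤ 2 * Sh.card + ((k + 1) * k - 1) := by
      calc 2 * ((k + 1) * k) = ∑ S ∈ Sh, 2 * (𝒯.filter (fun T => S ⊆ T)).card := by
            rw [← Finset.mul_sum, count1]
        _ ≤ ∑ S ∈ Sh, (2 + (𝒯.filter (fun T => S ⊆ T)).card *
            ((𝒯.filter (fun T => S ⊆ T)).card - 1)) := Finset.sum_le_sum pointwise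
        _ = 2 * Sh.card + ∑ S ∈ Sh, (𝒯.filter (fun T => S ⊆ T)).card *
            ((𝒯.filter (fun T => S ⊆ T)).card - 1) := by
            rw [Finset.sum_add_distrib, Finset.sum_const, smul_eq_mul, mul_comm]
        _ ≤ 2 * Sh.card + ((k + 1) * k - 1) := by omega
    have hShle : 2 * Sh.card ≤ (k + 1) * k := by
      rw [← two_mul_choose_two k]
      omega
    have hX : 0 < (k + 1) * k := Nat.mul_pos (by omega) (by omega)
    omega


lemma key {a b : ℕ} (ha : 0 < a) (hab : a + 2 ≤ b) {W : Type} [Fintype W]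
    (H : SimpleGraph W)
    (hD : domPoly H = domPoly (completeBipartiteGraph (Fin a) (Fin b))) :
    Nonempty (H ≃g completeBipartiteGraph (Fin a) (Fin b)) := by
  classical
  have hb3 : 3 ≤ b := by omega
  have hcardK : Fintype.card (Fin a ⊕ Fin b) = a + b := by simp
  have hKpos : 1 ≤ Fintype.card (Fin a ⊕ Fin b) := by omega
  have hcW : Fintype.card W = a + b := (card_eq_of_domPoly_eq hD hKpos).trans hcardK
  have hprof : ∀ i, 1 ≤ i →
      (ND H i).card = (ND (completeBipartiteGraph (Fin a) (Fin b)) i).card :=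
    fun i hi => ND_card_eq_of_domPoly_eq hD hKpos i hi
  -- the relevant level counts
  have fb : (ND H b).card = 0 := by
    rw [hprof b (by omega), ND_K_card ha (by omega) (by omega : 1 ≤ b)]
    rw [Nat.choose_eq_zero_of_lt (by omega : a < b), Nat.choose_self,
      if_neg (by omega : b ≠ a), if_pos rfl]
  have fb1 : (ND H (b-1)).card = b := by
    rw [hprof (b-1) (by omega), ND_K_card ha (by omega) (by omega : 1 ≤ b - 1)]
    rw [Nat.choose_eq_zero_of_lt (by omega : a < b - 1), if_neg (by omega : b - 1 ≠ a),
      if_neg (by omega : b - 1 ≠ b), Nat.choose_symm (show 1 ≤ b by omega),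
      Nat.choose_one_right]
    omega
  have fb2 : (ND H (b-2)).card = b.choose 2 := by
    rw [hprof (b-2) (by omega), ND_K_card ha (by omega) (by omega : 1 ≤ b - 2)]
    have h1 : b.choose (b - 2) = b.choose 2 := Nat.choose_symm (show 2 ≤ b by omega)
    rw [if_neg (by omega : b - 2 ≠ b), h1]
    rcases eq_or_ne (b - 2) a with he | hne
    · rw [if_pos he, ← he, Nat.choose_self]
      omega
    · rw [if_neg hne, Nat.choose_eq_zero_of_lt (by omega : a < b - 2)]
      omega
  have fa : (ND H a).card = b.choose a := by
    rw [hprof a (by omega), ND_K_card ha (by omega) (by omega : 1 ≤ a)]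
    rw [if_pos rfl, if_neg (by omega : a ≠ b), Nat.choose_self]
    omega
  -- basic facts about non-dominating sets in H
  have hmono : ∀ S T : Finset W, S ⊆ T → ¬ Dominates H ↑T → ¬ Dominates H ↑S := by
    intro S T hST hT
    obtain ⟨v, hv⟩ := not_dominates_iff.1 hT
    exact not_dominates_iff.2 ⟨v, hST.trans hv⟩
  have hMnd : ∀ v : W, ¬ Dominates H ↑(Mv H v) :=
    fun v => not_dominates_iff.2 ⟨v, Finset.Subset.refl _⟩
  have hbound : ∀ S : Finset W, ¬ Dominates H ↑S → S.card ≤ b - 1 := by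
    intro S hS
    by_contra hc
    push_neg at hc
    obtain ⟨S', hS'sub, hS'card⟩ := Finset.exists_subset_card_eq (by omega : b ≤ S.card)
    have h1 : S' ∈ ND H b := mem_ND.2 ⟨hS'card, hmono S' S hS'sub hS⟩
    have := Finset.card_pos.2 ⟨S', h1⟩
    omega
  -- every set in the top level is some Mv
  have htop : ∀ S ∈ ND H (b-1), ∃ v, S = Mv H v := by
    intro S hS
    rw [mem_ND] at hS
    obtain ⟨v, hv⟩ := not_dominates_iff.1 hS.2
    refine ⟨v, Finset.eq_of_subset_of_card_le hv ?_⟩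
    have := hbound (Mv H v) (hMnd v)
    omega
  -- apply the shadow structure lemma with k = b - 1
  obtain ⟨B', hB'card, hB'sub⟩ : ∃ Z : Finset W, Z.card = b ∧ ∀ T ∈ ND H (b-1), T ⊆ Z := by
    have hk2 : 2 ≤ b - 1 := by omega
    have hTcard : (ND H (b-1)).card = (b-1) + 1 := by rw [fb1]; omega
    have hTmem : ∀ T ∈ ND H (b-1), T.card = b - 1 := fun T hT => (mem_ND.1 hT).1
    have hshsub : ((ND H (b-1)).biUnion fun T => T.powersetCard (b-1-1)) ⊆ ND H (b-2) := by
      intro S hS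
      rw [Finset.mem_biUnion] at hS
      obtain ⟨T, hT, hST⟩ := hS
      rw [Finset.mem_powersetCard] at hST
      refine mem_ND.2 ⟨by omega, hmono S T hST.1 (mem_ND.1 hT).2⟩
    have hsh : ((ND H (b-1)).biUnion fun T => T.powersetCard (b-1-1)).card
        ≤ ((b-1) + 1).choose 2 := by
      calc ((ND H (b-1)).biUnion fun T => T.powersetCard (b-1-1)).card
          ≤ (ND H (b-2)).card := Finset.card_le_card hshsub
        _ = b.choose 2 := fb2
        _ = ((b-1) + 1).choose 2 := by congr 1; omega
    obtain ⟨Z, hZ1, hZ2⟩ := shadow_structure hk2 hTcard hTmem hsh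
    exact ⟨Z, by omega, hZ2⟩
  -- the top level is exactly the (b-1)-subsets of B'
  have hcover : ND H (b-1) = B'.powersetCard (b-1) := by
    apply Finset.eq_of_subset_of_card_le
    · intro T hT
      exact Finset.mem_powersetCard.2 ⟨hB'sub T hT, (mem_ND.1 hT).1⟩
    · rw [Finset.card_powersetCard, hB'card, fb1,
        Nat.choose_symm (show 1 ≤ b by omega), Nat.choose_one_right]
  -- choose, for each z ∈ B', a vertex v with Mv H v = B'.erase z
  have hvexists : ∀ z : W, ∃ u : W, z ∈ B' → Mv H u = B'.erase z := by
    intro z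
    by_cases hz : z ∈ B'
    · have hmem : B'.erase z ∈ ND H (b-1) := by
        rw [hcover, Finset.mem_powersetCard]
        exact ⟨Finset.erase_subset _ _, by rw [Finset.card_erase_of_mem hz, hB'card]⟩
      obtain ⟨v, hv⟩ := htop _ hmem
      exact ⟨v, fun _ => hv.symm⟩
    · exact ⟨z, fun h => absurd h hz⟩
  choose vz hvz using hvexists
  have hvznotmem : ∀ z ∈ B', vz z ∉ B' ∨ vz z = z := by
    intro z hz
    have h1 : vz z ∉ Mv H (vz z) := not_mem_Mv_self _
    rw [hvz z hz] at h1
    rw [Finset.mem_erase] at h1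
    push_neg at h1
    by_cases h2 : vz z = z
    · exact Or.inr h2
    · exact Or.inl (h1 h2)
  have hvzinj : ∀ z ∈ B', ∀ z' ∈ B', vz z = vz z' → z = z' := by
    intro z hz z' hz' he
    have h1 : B'.erase z = B'.erase z' := by
      rw [← hvz z hz, ← hvz z' hz', he]
    by_contra hne
    have : z' ∈ B'.erase z := Finset.mem_erase.2 ⟨fun h => hne h.symm, hz'⟩
    rw [h1] at this
    exact (Finset.mem_erase.1 this).1 rfl
  -- small subsets of B' are non-dominating
  have hsubB : ∀ S : Finset W, S ⊆ B' → S.card < b → ¬ Dominates H ↑S := by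
    intro S hSB hScard
    have : ∃ z ∈ B', z ∉ S := by
      by_contra hc
      push_neg at hc
      have := Finset.card_le_card hc
      omega
    obtain ⟨z, hz, hzS⟩ := this
    apply hmono S (B'.erase z) _ _
    · intro x hx
      exact Finset.mem_erase.2 ⟨fun h => hzS (h ▸ hx), hSB hx⟩
    · rw [← hvz z hz]
      exact hMnd _
  -- level a is exactly the a-subsets of B'
  have hNDa : ND H a = B'.powersetCard a := by
    symm
    apply Finset.eq_of_subset_of_card_le
    · intro S hS
      rw [Finset.mem_powersetCard] at hS
      exact mem_ND.2 ⟨hS.2, hsubB S hS.1 (by omega)⟩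
    · rw [Finset.card_powersetCard, hB'card, fa]
  -- vertices whose Mv is not inside B' have small Mv
  have hsmall : ∀ v : W, ¬ (Mv H v ⊆ B') → (Mv H v).card < a := by
    intro v hv
    by_contra hc
    push_neg at hc
    obtain ⟨x, hxM, hxB⟩ := Finset.not_subset.1 hv
    obtain ⟨S₀, hS₀sub, hS₀card⟩ := Finset.exists_subset_card_eq
      (by rw [Finset.card_erase_of_mem hxM]; omega : a - 1 ≤ ((Mv H v).erase x).card)
    set S := insert x S₀ with hSdef
    have hxS₀ : x ∉ S₀ := fun h => (Finset.mem_erase.1 (hS₀sub h)).1 rfl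
    have hScard : S.card = a := by
      rw [hSdef, Finset.card_insert_of_notMem hxS₀, hS₀card]
      omega
    have hSsub : S ⊆ Mv H v := by
      intro t ht
      rw [hSdef, Finset.mem_insert] at ht
      rcases ht with rfl | ht
      · exact hxM
      · exact Finset.mem_of_mem_erase (hS₀sub ht)
    have hSnd : S ∈ ND H a := mem_ND.2 ⟨hScard, hmono S (Mv H v) hSsub (hMnd v)⟩
    rw [hNDa, Finset.mem_powersetCard] at hSnd
    exact hxB (hSnd.1 (by rw [hSdef]; exact Finset.mem_insert_self x S₀))
  -- case analysis
  by_cases hk0 : ∀ z ∈ B', vz z = z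
  case neg =>
    -- some vz z₀ ∉ B'; derive a contradiction
    exfalso
    push_neg at hk0
    obtain ⟨z₀, hz₀, hvz₀⟩ := hk0
    have hv₀notB : vz z₀ ∉ B' := (hvznotmem z₀ hz₀).resolve_right hvz₀
    have hallout : ∀ z ∈ B', vz z ∉ B' := by
      intro z hz
      rcases hvznotmem z hz with h | h
      · exact h
      · -- vz z = z; derive z = z₀, contradiction
        exfalso
        have hMzz : Mv H z = B'.erase z := by
          have h2 := hvz z hz; rwa [h] at h2
        have hadjz : H.Adj z (vz z₀) := by
          have h1 : vz z₀ ∉ Mv H z := by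
            rw [hMzz]
            intro hmem
            exact hv₀notB (Finset.mem_of_mem_erase hmem)
          rw [mem_Mv] at h1
          push_neg at h1
          exact h1 (fun he => hv₀notB (by rwa [he]))
        have hzz₀ : z = z₀ := by
          by_contra hne
          have h2 : z ∈ Mv H (vz z₀) := by
            rw [hvz z₀ hz₀]
            exact Finset.mem_erase.2 ⟨hne, hz⟩
          exact (mem_Mv.1 h2).2 hadjz.symm
        rw [hzz₀] at h
        exact hvz₀ h
    have hcard : B'.card ≤ (Finset.univ \ B').card := by
      apply Finset.card_le_card_of_injOn vz
      · intro z hz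
        exact Finset.mem_sdiff.2 ⟨Finset.mem_univ _, hallout z hz⟩
      · intro z hz z' hz' he
        exact hvzinj z hz z' hz' he
    rw [Finset.card_sdiff_of_subset (Finset.subset_univ _), Finset.card_univ, hcW, hB'card] at hcard
    omega
  case pos =>
  -- all vz z = z : N[z] = complement of B'.erase z
  have hMz : ∀ z ∈ B', Mv H z = B'.erase z := fun z hz => by
    have h2 := hvz z hz; rwa [hk0 z hz] at h2
  set A' : Finset W := Finset.univ \ B' with hA'def
  have hA'card : A'.card = a := by
    rw [hA'def, Finset.card_sdiff_of_subset (Finset.subset_univ _), Finset.card_univ, hcW, hB'card]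
    omega
  have hmemA' : ∀ x : W, x ∈ A' ↔ x ∉ B' := by
    intro x
    rw [hA'def, Finset.mem_sdiff]
    simp
  -- adjacency from B' vertices
  have hadjzB : ∀ z ∈ B', ∀ w : W, H.Adj z w ↔ w ∉ B' := by
    intro z hz w
    constructor
    · intro hadj
      have h1 : w ∉ Mv H z := fun h => (mem_Mv.1 h).2 hadj
      rw [hMz z hz, Finset.mem_erase] at h1
      push_neg at h1
      exact h1 (H.ne_of_adj hadj).symm
    · intro hwB
      have hwz : w ≠ z := fun h => hwB (h ▸ hz)
      have h1 : w ∉ Mv H z := by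
        rw [hMz z hz]
        intro hmem
        exact hwB (Finset.mem_of_mem_erase hmem)
      rw [mem_Mv] at h1
      push_neg at h1
      exact h1 hwz
  -- A' is independent
  have hAind : ∀ x ∈ A', ∀ y ∈ A', ¬ H.Adj x y := by
    rcases eq_or_lt_of_le (by omega : 1 ≤ a) with ha1 | ha2
    · -- a = 1 : A' is a single vertex
      intro x hx y hy hadj
      have h1 : A'.card ≤ 1 := by omega
      have := Finset.card_le_one.1 h1 x hx y hy
      exact H.loopless.irrefl x (this ▸ hadj)
    · -- a ≥ 2 : use the level a-1 count
      have fa1 : (ND H (a-1)).card = a + b.choose (a-1) := by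
        rw [hprof (a-1) (by omega), ND_K_card ha (by omega) (by omega : 1 ≤ a - 1)]
        rw [if_neg (by omega : a - 1 ≠ a), if_neg (by omega : a - 1 ≠ b),
          Nat.choose_symm (show 1 ≤ a by omega), Nat.choose_one_right]
        omega
      have hMA : ∀ u ∈ A', Mv H u ⊆ A'.erase u := by
        intro u hu t ht
        rw [mem_Mv] at ht
        have htB : t ∉ B' := by
          intro htB
          exact ht.2 ((hadjzB t htB u).2 ((hmemA' u).1 hu)).symm
        exact Finset.mem_erase.2 ⟨ht.1, (hmemA' t).2 htB⟩
      have hpowsub : B'.powersetCard (a-1) ⊆ ND H (a-1) := by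
        intro S hS
        rw [Finset.mem_powersetCard] at hS
        exact mem_ND.2 ⟨hS.2, hsubB S hS.1 (by omega)⟩
      set D : Finset (Finset W) := ND H (a-1) \ B'.powersetCard (a-1) with hDdef
      have hDcard : D.card = a := by
        rw [hDdef, Finset.card_sdiff_of_subset hpowsub, fa1, Finset.card_powersetCard, hB'card]
        omega
      have hD2A : ∀ S ∈ D, ∃ u ∈ A', S = Mv H u ∧ Mv H u = A'.erase u := by
        intro S hS
        rw [hDdef, Finset.mem_sdiff] at hS
        have hScard : S.card = a - 1 := (mem_ND.1 hS.1).1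
        have hSnotB : ¬ S ⊆ B' := by
          intro hc
          exact hS.2 (Finset.mem_powersetCard.2 ⟨hc, hScard⟩)
        obtain ⟨u, hu⟩ := not_dominates_iff.1 (mem_ND.1 hS.1).2
        have huA : u ∈ A' := by
          rw [hmemA']
          intro huB
          exact hSnotB (hu.trans ((hMz u huB) ▸ Finset.erase_subset _ _))
        have hMsub : Mv H u ⊆ A'.erase u := hMA u huA
        have hMcard : (Mv H u).card ≤ a - 1 := by
          have h1 := Finset.card_le_card hMsub
          rw [Finset.card_erase_of_mem huA, hA'card] at h1
          omega
        have hSeq : S = Mv H u := Finset.eq_of_subset_of_card_le hu (by omega)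
        have hMeq : Mv H u = A'.erase u := by
          apply Finset.eq_of_subset_of_card_le hMsub
          rw [Finset.card_erase_of_mem huA, hA'card, ← hSeq, hScard]
        exact ⟨u, huA, hSeq, hMeq⟩
      have himg : D ⊆ A'.image (fun u => A'.erase u) := by
        intro S hS
        obtain ⟨u, hu, hS1, hS2⟩ := hD2A S hS
        exact Finset.mem_image.2 ⟨u, hu, (hS1.trans hS2).symm⟩
      have hDeq : D = A'.image (fun u => A'.erase u) := by
        apply Finset.eq_of_subset_of_card_le himg
        calc (A'.image (fun u => A'.erase u)).card ≤ A'.card := Finset.card_image_le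
          _ = a := hA'card
          _ = D.card := hDcard.symm
      have hMvA : ∀ u ∈ A', Mv H u = A'.erase u := by
        intro u hu
        have h1 : A'.erase u ∈ D := by
          rw [hDeq]
          exact Finset.mem_image.2 ⟨u, hu, rfl⟩
        obtain ⟨u', hu', hS1, hS2⟩ := hD2A _ h1
        have huu' : u = u' := by
          by_contra hne
          have : u ∈ A'.erase u' := Finset.mem_erase.2 ⟨hne, hu⟩
          rw [← hS2, ← hS1] at this
          exact (Finset.mem_erase.1 this).1 rfl
        rw [huu']
        exact hS2
      intro x hx y hy hadj
      have hxy : x ≠ y := H.ne_of_adj hadj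
      have : y ∈ Mv H x := by
        rw [hMvA x hx]
        exact Finset.mem_erase.2 ⟨hxy.symm, hy⟩
      exact (mem_Mv.1 this).2 hadj
  -- full adjacency characterization
  have hadj : ∀ u w : W, H.Adj u w ↔ ((u ∉ B' ∧ w ∈ B') ∨ (u ∈ B' ∧ w ∉ B')) := by
    intro u w
    by_cases hu : u ∈ B'
    · rw [hadjzB u hu w]
      constructor
      · intro h; exact Or.inr ⟨hu, h⟩
      · rintro (⟨h1, _⟩ | ⟨_, h2⟩)
        · exact absurd hu h1
        · exact h2
    · by_cases hw : w ∈ B'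
      · constructor
        · intro _; exact Or.inl ⟨hu, hw⟩
        · intro _
          exact ((hadjzB w hw u).2 hu).symm
      · constructor
        · intro h
          exact absurd h (hAind u ((hmemA' u).2 hu) w ((hmemA' w).2 hw))
        · rintro (⟨_, h2⟩ | ⟨h1, _⟩)
          · exact absurd h2 hw
          · exact absurd h1 hu
  -- build the isomorphism
  have hcardB : Fintype.card {x : W // x ∈ B'} = b := by
    rw [Fintype.card_coe, hB'card]
  have hcardA : Fintype.card {x : W // x ∉ B'} = a := by
    have : Fintype.card {x : W // x ∈ A'} = a := by rw [Fintype.card_coe, hA'card]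
    rw [← this]
    apply Fintype.card_congr
    exact Equiv.subtypeEquivRight (fun x => ((hmemA' x).symm))
  set eA : {x : W // x ∉ B'} ≃ Fin a := Fintype.equivFinOfCardEq hcardA with heA
  set eB : {x : W // x ∈ B'} ≃ Fin b := Fintype.equivFinOfCardEq hcardB with heB
  set φ : W ≃ (Fin a ⊕ Fin b) :=
    ((Equiv.sumCompl (fun x => x ∈ B')).symm.trans
      ((Equiv.sumComm _ _).trans (Equiv.sumCongr eA eB))) with hφ
  have hφmem : ∀ u : W, (φ u).isLeft ↔ u ∉ B' := by
    intro u
    by_cases hu : u ∈ B'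
    · simp [hφ, Equiv.sumCompl_symm_apply_of_pos hu, hu]
    · simp [hφ, Equiv.sumCompl_symm_apply_of_neg hu, hu]
  have hφmem' : ∀ u : W, (φ u).isRight ↔ u ∈ B' := by
    intro u
    rw [← Sum.not_isLeft, hφmem]
    simp
  refine ⟨⟨φ, @fun u w => ?_⟩⟩
  show ((φ u).isLeft ∧ (φ w).isRight) ∨ ((φ u).isRight ∧ (φ w).isLeft) ↔ H.Adj u w
  rw [hadj u w]
  simp [hφmem, hφmem']

lemma domPoly_K_comm (a b : ℕ) (ha : 0 < a) (hb : 0 < b) :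
    domPoly (completeBipartiteGraph (Fin a) (Fin b))
      = domPoly (completeBipartiteGraph (Fin b) (Fin a)) := by
  apply Polynomial.ext
  intro j
  rw [coeff_domPoly, coeff_domPoly]
  have hc1 : Fintype.card (Fin a ⊕ Fin b) = a + b := by simp
  have hc2 : Fintype.card (Fin b ⊕ Fin a) = a + b := by simp [Nat.add_comm]
  rw [hc1, hc2]
  by_cases hj : j ∈ Finset.Icc 1 (a + b)
  · rw [if_pos hj, if_pos hj]
    have hj1 : 1 ≤ j := (Finset.mem_Icc.1 hj).1
    have h1 := numDom_add_ND (completeBipartiteGraph (Fin a) (Fin b)) j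
    have h2 := numDom_add_ND (completeBipartiteGraph (Fin b) (Fin a)) j
    rw [hc1, ND_K_card ha hb hj1] at h1
    rw [hc2, ND_K_card hb ha hj1] at h2
    have : numDom (completeBipartiteGraph (Fin a) (Fin b)) j
        = numDom (completeBipartiteGraph (Fin b) (Fin a)) j := by omega
    rw [this]
  · rw [if_neg hj, if_neg hj]

/-- swapping the two sides of a complete bipartite graph -/
noncomputable def swapIso (a b : ℕ) :
    completeBipartiteGraph (Fin b) (Fin a) ≃g completeBipartiteGraph (Fin a) (Fin b) := by
  refine ⟨Equiv.sumComm (Fin b) (Fin a), @fun x y => ?_⟩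
  cases x <;> cases y <;> simp


end DomUnique


/-- For `|a − b| ≥ 2`, the complete bipartite graph `K(a,b)` is `D`-unique. -/
theorem completeBipartite_D_unique {a b : ℕ} (ha : 0 < a) (hb : 0 < b)
    (hab : 2 ≤ |(a : ℤ) - (b : ℤ)|) {W : Type} [Fintype W] (H : SimpleGraph W)
    (hD : domPoly H = domPoly (completeBipartiteGraph (Fin a) (Fin b))) :
    Nonempty (H ≃g completeBipartiteGraph (Fin a) (Fin b)) := by
  rcases lt_trichotomy a b with h | h | h
  · have h2 : a + 2 ≤ b := by
      rcases abs_cases ((a : ℤ) - (b : ℤ)) with ⟨h1, _⟩ | ⟨h1, _⟩ <;> omega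
    exact DomUnique.key ha h2 H hD
  · exfalso
    subst h
    simp at hab
  · have h2 : b + 2 ≤ a := by
      rcases abs_cases ((a : ℤ) - (b : ℤ)) with ⟨h1, _⟩ | ⟨h1, _⟩ <;> omega
    have hD' : domPoly H = domPoly (completeBipartiteGraph (Fin b) (Fin a)) := by
      rw [hD, DomUnique.domPoly_K_comm a b ha hb]
    obtain ⟨e⟩ := DomUnique.key hb h2 H hD'
    exact ⟨e.trans (DomUnique.swapIso a b)⟩
end
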